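/- arXiv:0812.4279 — 9 statements merged into one kernel-verified Lean document; each statement's English description precedes it below -/
import Mathlib

section
/- (Markov–Lukács) A univariate real polynomial p is nonnegative on the interval [-1,1] if and only if there exist polynomials s and t, each a sum of squares of polynomials, such that p(x) = s(x) + (1 - x^2)·t(x). -/
open Polynomial

def IsSOS (p : ℝ[X]) : Prop := ∃ (m : ℕ) (q : Fin m → ℝ[X]), p = ∑ i, (q i) ^ 2

theorem sos_zero : IsSOS 0 := ⟨0, ![], by simp⟩

theorem sos_sq (q : ℝ[X]) : IsSOS (q ^ 2) := ⟨1, ![q], by simp⟩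

theorem sos_add {p q : ℝ[X]} (hp : IsSOS p) (hq : IsSOS q) : IsSOS (p + q) := by
  obtain ⟨m, a, rfl⟩ := hp
  obtain ⟨n, b, rfl⟩ := hq
  exact ⟨m + n, Fin.append a b, by rw [Fin.sum_univ_add]; simp⟩

theorem sos_mul {p q : ℝ[X]} (hp : IsSOS p) (hq : IsSOS q) : IsSOS (p * q) := by
  obtain ⟨m, a, rfl⟩ := hp
  obtain ⟨n, b, rfl⟩ := hq
  refine ⟨m * n, fun i => a (finProdFinEquiv.symm i).1 * b (finProdFinEquiv.symm i).2, ?_⟩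
  rw [Finset.sum_mul_sum]
  rw [← Fintype.sum_prod_type']
  rw [← Equiv.sum_comp finProdFinEquiv.symm (fun x : Fin m × Fin n => a x.1 ^ 2 * b x.2 ^ 2)]
  simp [mul_pow]

theorem sos_smul {c : ℝ} (hc : 0 ≤ c) {p : ℝ[X]} (hp : IsSOS p) : IsSOS (C c * p) := by
  have : C c = (C (Real.sqrt c)) ^ 2 := by
    rw [← C_pow, Real.sq_sqrt hc]
  rw [this]
  exact sos_mul (sos_sq _) hp

theorem sos_const {c : ℝ} (hc : 0 ≤ c) : IsSOS (C c) := by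
  simpa using sos_smul hc (sos_sq 1)

theorem sos_eval_nonneg {p : ℝ[X]} (hp : IsSOS p) (x : ℝ) : 0 ≤ p.eval x := by
  obtain ⟨m, a, rfl⟩ := hp
  simp only [eval_finset_sum, eval_pow]
  exact Finset.sum_nonneg fun i _ => sq_nonneg _

def Nice (p : ℝ[X]) : Prop :=
  ∃ s t : ℝ[X], IsSOS s ∧ IsSOS t ∧ p = s + (1 - X ^ 2) * t

theorem nice_of_sos {p : ℝ[X]} (hp : IsSOS p) : Nice p :=
  ⟨p, 0, hp, sos_zero, by ring⟩

theorem nice_add {p q : ℝ[X]} (hp : Nice p) (hq : Nice q) : Nice (p + q) := by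
  obtain ⟨s, t, hs, ht, rfl⟩ := hp
  obtain ⟨s', t', hs', ht', rfl⟩ := hq
  exact ⟨s + s', t + t', sos_add hs hs', sos_add ht ht', by ring⟩

theorem nice_sos_mul {d p : ℝ[X]} (hd : IsSOS d) (hp : Nice p) : Nice (d * p) := by
  obtain ⟨s, t, hs, ht, rfl⟩ := hp
  exact ⟨d * s, d * t, sos_mul hd hs, sos_mul hd ht, by ring⟩

theorem nice_one_sub_X_mul {p : ℝ[X]} (hp : Nice p) : Nice ((1 - X) * p) := by
  obtain ⟨s, t, hs, ht, rfl⟩ := hp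
  refine ⟨C (1/2) * ((1 - X) ^ 2 * s) + C (1/2) * ((1 - X ^ 2) ^ 2 * t),
    C (1/2) * s + C (1/2) * ((1 - X) ^ 2 * t), ?_, ?_, ?_⟩
  · exact sos_add (sos_smul (by norm_num) (sos_mul (sos_sq _) hs))
      (sos_smul (by norm_num) (sos_mul (sos_sq _) ht))
  · exact sos_add (sos_smul (by norm_num) hs)
      (sos_smul (by norm_num) (sos_mul (sos_sq _) ht))
  · have h2 : (C (1/2) : ℝ[X]) + C (1/2) = 1 := by rw [← C_add]; norm_num
    linear_combination (-((1 - (X:ℝ[X])) * (s + (1 - X ^ 2) * t))) * h2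

theorem nice_one_add_X_mul {p : ℝ[X]} (hp : Nice p) : Nice ((1 + X) * p) := by
  obtain ⟨s, t, hs, ht, rfl⟩ := hp
  refine ⟨C (1/2) * ((1 + X) ^ 2 * s) + C (1/2) * ((1 - X ^ 2) ^ 2 * t),
    C (1/2) * s + C (1/2) * ((1 + X) ^ 2 * t), ?_, ?_, ?_⟩
  · exact sos_add (sos_smul (by norm_num) (sos_mul (sos_sq _) hs))
      (sos_smul (by norm_num) (sos_mul (sos_sq _) ht))
  · exact sos_add (sos_smul (by norm_num) hs)
      (sos_smul (by norm_num) (sos_mul (sos_sq _) ht))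
  · have h2 : (C (1/2) : ℝ[X]) + C (1/2) = 1 := by rw [← C_add]; norm_num
    linear_combination (-((1 + (X:ℝ[X])) * (s + (1 - X ^ 2) * t))) * h2

theorem nonneg_extend {f : ℝ[X]} {r : ℝ}
    (h : ∀ x ∈ Set.Icc (-1:ℝ) 1, x ≠ r → 0 ≤ f.eval x) :
    ∀ x ∈ Set.Icc (-1:ℝ) 1, 0 ≤ f.eval x := by
  intro x hx
  rcases eq_or_ne x r with rfl | hne
  · have hcl : IsClosed {y : ℝ | 0 ≤ f.eval y} :=
      isClosed_le continuous_const f.continuous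
    rcases eq_or_lt_of_le hx.1 with heq | hlt
    · have hsub : Set.Ioo (-1:ℝ) 1 ⊆ {y : ℝ | 0 ≤ f.eval y} := fun y hy =>
        h y ⟨hy.1.le, hy.2.le⟩ (by rw [← heq]; exact hy.1.ne')
      have := hcl.closure_subset_iff.mpr hsub
      apply this
      rw [closure_Ioo (by norm_num : (-1:ℝ) ≠ 1)]
      exact hx
    · have hsub : Set.Ioo (-1:ℝ) x ⊆ {y : ℝ | 0 ≤ f.eval y} := fun y hy =>
        h y ⟨hy.1.le, hy.2.le.trans hx.2⟩ (hy.2.ne)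
      have := hcl.closure_subset_iff.mpr hsub
      apply this
      rw [closure_Ioo hlt.ne]
      exact ⟨hx.1, le_refl x⟩
  · exact h x hx hne

theorem interior_root {p q : ℝ[X]} {r : ℝ} (hr : r ∈ Set.Ioo (-1:ℝ) 1)
    (hpq : p = (X - C r) * q)
    (hpos : ∀ x ∈ Set.Icc (-1:ℝ) 1, 0 ≤ p.eval x) : q.eval r = 0 := by
  have hmin : IsLocalMin (fun x => p.eval x) r := by
    have hev : ∀ᶠ x in nhds r, p.eval r ≤ p.eval x := by
      filter_upwards [isOpen_Ioo.mem_nhds hr] with x hx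
      have : p.eval r = 0 := by simp [hpq]
      rw [this]
      exact hpos x ⟨hx.1.le, hx.2.le⟩
    exact hev
  have hd := hmin.deriv_eq_zero
  rw [Polynomial.deriv] at hd
  have : p.derivative = q + (X - C r) * q.derivative := by
    rw [hpq, derivative_mul]
    simp
  rw [this] at hd
  simpa using hd

theorem nice_smul {c : ℝ} (hc : 0 ≤ c) {p : ℝ[X]} (hp : Nice p) : Nice (C c * p) :=
  nice_sos_mul (sos_const hc) hp

theorem main_induction : ∀ (n : ℕ) (p : ℝ[X]), p.natDegree ≤ n →
    (∀ x ∈ Set.Icc (-1:ℝ) 1, 0 ≤ p.eval x) → Nice p := by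
  intro n
  induction n using Nat.strong_induction_on with
  | _ n ih =>
  intro p hdeg hpos
  rcases eq_or_ne p 0 with rfl | hp0
  · exact nice_of_sos sos_zero
  rcases Nat.eq_zero_or_pos p.natDegree with h0 | hdpos
  · rw [Polynomial.eq_C_of_natDegree_eq_zero h0]
    refine nice_of_sos (sos_const ?_)
    have := hpos 0 (by norm_num)
    rwa [← Polynomial.coeff_zero_eq_eval_zero] at this
  · -- natDegree ≥ 1
    have hn1 : 1 ≤ n := le_trans hdpos hdeg
    obtain ⟨z, hz⟩ : ∃ z : ℂ, Polynomial.aeval z p = 0 :=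
      IsAlgClosed.exists_aeval_eq_zero ℂ p
        (by rw [degree_eq_natDegree hp0]; exact_mod_cast hdpos.ne')
    cases eq_or_ne z.im 0 with
    | inl hz0 =>
      -- real root r
      lift z to ℝ using hz0 with r
      have hroot : p.IsRoot r := by
        have h := hz
        erw [Polynomial.aeval_ofReal, RCLike.ofReal_eq_zero] at h
        exact h
      obtain ⟨q, hq⟩ := (Polynomial.dvd_iff_isRoot.mpr hroot)
      have hq0 : q ≠ 0 := by rintro rfl; simp [hq] at hp0
      have hdq : q.natDegree = p.natDegree - 1 := by
        have := Polynomial.natDegree_mul (Polynomial.X_sub_C_ne_zero r) hq0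
        rw [← hq, Polynomial.natDegree_X_sub_C] at this
        omega
      have hqlt : q.natDegree < n := by omega
      rcases le_or_gt r (-1) with hr | hr
      · -- r ≤ -1 : p = ((1+X) + C (-1-r)) * q, q ≥ 0 on Icc
        have hqpos : ∀ x ∈ Set.Icc (-1:ℝ) 1, 0 ≤ q.eval x := by
          apply nonneg_extend (r := r)
          intro x hx hne
          have hxr : 0 < x - r := by
            rcases lt_or_eq_of_le hr with h | h
            · linarith [hx.1]
            · cases lt_or_eq_of_le hx.1 with
              | inl h' => linarith
              | inr h' => exact absurd (h' ▸ h.symm ▸ rfl : x = r) hne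
          have := hpos x hx
          rw [hq] at this
          simp only [Polynomial.eval_mul, Polynomial.eval_sub, Polynomial.eval_X,
            Polynomial.eval_C] at this
          exact nonneg_of_mul_nonneg_right (by linarith) hxr
        have hnq := ih q.natDegree hqlt q le_rfl hqpos
        have : p = (1 + X) * q + C (-1 - r) * q := by
          rw [hq, C_sub, C_neg, C_1]; ring
        rw [this]
        exact nice_add (nice_one_add_X_mul hnq) (nice_smul (by linarith) hnq)
      · rcases le_or_gt 1 r with hr1 | hr1
        · -- r ≥ 1 : p = ((1-X) + C (r-1)) * (-q)
          have hqpos : ∀ x ∈ Set.Icc (-1:ℝ) 1, 0 ≤ (-q).eval x := by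
            apply nonneg_extend (r := r)
            intro x hx hne
            have hxr : 0 < r - x := by
              rcases lt_or_eq_of_le hr1 with h | h
              · linarith [hx.2]
              · cases lt_or_eq_of_le hx.2 with
                | inl h' => linarith
                | inr h' => exact absurd (by rw [h', ← h] : x = r) hne
            have := hpos x hx
            rw [hq] at this
            simp only [Polynomial.eval_mul, Polynomial.eval_sub, Polynomial.eval_X,
              Polynomial.eval_C] at this
            simp only [Polynomial.eval_neg]
            nlinarith
          have hnq := ih (-q).natDegree (by rwa [natDegree_neg]) (-q) le_rfl hqpos
          have : p = (1 - X) * (-q) + C (r - 1) * (-q) := by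
            rw [hq, C_sub, C_1]; ring
          rw [this]
          exact nice_add (nice_one_sub_X_mul hnq) (nice_smul (by linarith) hnq)
        · -- -1 < r < 1 : double root
          have hqr : q.eval r = 0 := interior_root ⟨hr, hr1⟩ hq hpos
          obtain ⟨u, hu⟩ := (Polynomial.dvd_iff_isRoot.mpr hqr)
          have hu0 : u ≠ 0 := by rintro rfl; simp [hu] at hq0
          have hpu : p = (X - C r) ^ 2 * u := by rw [hq, hu]; ring
          have hupos : ∀ x ∈ Set.Icc (-1:ℝ) 1, 0 ≤ u.eval x := by
            apply nonneg_extend (r := r)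
            intro x hx hne
            have hxr0 : x - r ≠ 0 := sub_ne_zero.2 hne
            have hxr : 0 < (x - r) ^ 2 := by positivity
            have := hpos x hx
            rw [hpu] at this
            simp only [Polynomial.eval_mul, Polynomial.eval_pow, Polynomial.eval_sub,
              Polynomial.eval_X, Polynomial.eval_C] at this
            exact nonneg_of_mul_nonneg_right (by linarith) hxr
          have hdu : u.natDegree < n := by
            have h2 := Polynomial.natDegree_mul (Polynomial.X_sub_C_ne_zero r) hu0
            rw [← hu, Polynomial.natDegree_X_sub_C] at h2
            omega
          have hnu := ih u.natDegree hdu u le_rfl hupos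
          rw [hpu]
          exact nice_sos_mul (sos_sq _) hnu
    | inr hz0 =>
      obtain ⟨q, hq⟩ := p.quadratic_dvd_of_aeval_eq_zero_im_ne_zero hz hz0
      set d : ℝ[X] := X ^ 2 - C (2 * z.re) * X + C (‖z‖ ^ 2) with hd_def
      have hnorm : ‖z‖ ^ 2 = z.re ^ 2 + z.im ^ 2 := by
        rw [Complex.sq_norm, Complex.normSq_apply]; ring
      have hd_eq : d = (X - C z.re) ^ 2 + (C z.im) ^ 2 := by
        rw [hd_def, hnorm]
        simp only [two_mul, C_add, C_pow]
        ring
      have hd_sos : IsSOS d := by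
        rw [hd_eq]; exact sos_add (sos_sq _) (sos_sq _)
      have hd_pos : ∀ x : ℝ, 0 < d.eval x := by
        intro x
        rw [hd_eq]
        simp only [Polynomial.eval_add, Polynomial.eval_pow, Polynomial.eval_sub,
          Polynomial.eval_X, Polynomial.eval_C]
        have : 0 < z.im ^ 2 := by positivity
        nlinarith [sq_nonneg (x - z.re)]
      have hq0 : q ≠ 0 := by rintro rfl; simp [hq] at hp0
      have hdd : d.natDegree = 2 := by
        have : d = C 1 * X ^ 2 + C (-(2 * z.re)) * X + C (‖z‖ ^ 2) := by
          rw [hd_def, C_neg, C_1]; ring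
        rw [this]
        exact Polynomial.natDegree_quadratic one_ne_zero
      have hd0 : d ≠ 0 := fun h => by simp [h] at hdd
      have hqlt : q.natDegree < n := by
        have h2 := Polynomial.natDegree_mul hd0 hq0
        rw [← hq, hdd] at h2
        omega
      have hqpos : ∀ x ∈ Set.Icc (-1:ℝ) 1, 0 ≤ q.eval x := by
        intro x hx
        have h1 := hpos x hx
        rw [hq, Polynomial.eval_mul] at h1
        exact nonneg_of_mul_nonneg_right (by linarith) (hd_pos x)
      have hnq := ih q.natDegree hqlt q le_rfl hqpos
      rw [hq]
      exact nice_sos_mul hd_sos hnq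

theorem stmt_1 (p : Polynomial ℝ) :
    (∀ x ∈ Set.Icc (-1 : ℝ) 1, 0 ≤ p.eval x) ↔
    ∃ s t : Polynomial ℝ,
      (∃ (m : ℕ) (q : Fin m → Polynomial ℝ), s = ∑ i, (q i) ^ 2) ∧
      (∃ (m : ℕ) (q : Fin m → Polynomial ℝ), t = ∑ i, (q i) ^ 2) ∧
      p = s + (1 - Polynomial.X ^ 2) * t := by
  constructor
  · intro hpos
    obtain ⟨s, t, hs, ht, heq⟩ := main_induction p.natDegree p le_rfl hpos
    exact ⟨s, t, hs, ht, heq⟩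
  · rintro ⟨s, t, hs, ht, rfl⟩ x hx
    have h1 : (0:ℝ) ≤ (1 - x ^ 2) := by nlinarith [hx.1, hx.2]
    have h2 := sos_eval_nonneg hs x
    have h3 := sos_eval_nonneg ht x
    simp only [Polynomial.eval_add, Polynomial.eval_mul, Polynomial.eval_sub,
      Polynomial.eval_one, Polynomial.eval_pow, Polynomial.eval_X]
    nlinarith
end

section
/- A univariate real polynomial p of degree at most 2d is a sum of squares of polynomials if and only if there exists a symmetric positive semidefinite matrix Q ∈ ℝ^{(d+1)×(d+1)} (rows and columns indexed 0,…,d) such that for each k, the coefficient of x^k in p equals ∑_{i+j=k} Q_{ij}. -/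
open Matrix Polynomial Finset

lemma coeff_mul_fin (d : ℕ) (q r : Polynomial ℝ) (hq : q.natDegree ≤ d)
    (hr : r.natDegree ≤ d) (k : ℕ) :
    (q * r).coeff k = ∑ i : Fin (d + 1), ∑ j : Fin (d + 1),
      if (i : ℕ) + (j : ℕ) = k then q.coeff i * r.coeff j else 0 := by
  rw [Polynomial.coeff_mul]
  rw [Fin.sum_univ_eq_sum_range (fun i => ∑ j : Fin (d+1), if i + (j:ℕ) = k then q.coeff i * r.coeff j else 0)]
  rw [Finset.sum_congr rfl (fun i _ => Fin.sum_univ_eq_sum_range (fun j => if i + j = k then q.coeff i * r.coeff j else 0) (d+1))]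
  rw [← Finset.sum_product']
  rw [← Finset.sum_filter]
  symm
  apply Finset.sum_subset
  · intro x hx
    simp only [Finset.mem_filter] at hx
    simpa [Finset.mem_antidiagonal] using hx.2
  · intro x hx hx'
    simp only [Finset.HasAntidiagonal.mem_antidiagonal] at hx
    simp only [Finset.mem_filter, Finset.mem_product, Finset.mem_range, hx, and_true,
      not_and, not_lt] at hx'
    by_cases h1 : x.1 < d + 1
    · have : d + 1 ≤ x.2 := hx' h1
      have : r.coeff x.2 = 0 := Polynomial.coeff_eq_zero_of_natDegree_lt (by omega)
      simp [this]
    · have : q.coeff x.1 = 0 := Polynomial.coeff_eq_zero_of_natDegree_lt (by omega)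
      simp [this]

lemma gram_coeff (d m : ℕ) (q : Fin m → Polynomial ℝ) (hq : ∀ l, (q l).natDegree ≤ d) (k : ℕ) :
    (∑ l, (q l) ^ 2).coeff k = ∑ i : Fin (d + 1), ∑ j : Fin (d + 1),
      if (i : ℕ) + (j : ℕ) = k then (∑ l, (q l).coeff i * (q l).coeff j) else 0 := by
  rw [Polynomial.finset_sum_coeff]
  have h1 : ∀ l, ((q l)^2).coeff k = ∑ i : Fin (d+1), ∑ j : Fin (d+1),
      if (i:ℕ)+(j:ℕ) = k then (q l).coeff i * (q l).coeff j else 0 := fun l => by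
    rw [sq]; exact coeff_mul_fin d (q l) (q l) (hq l) (hq l) k
  symm
  calc ∑ i : Fin (d+1), ∑ j : Fin (d+1),
        (if (i:ℕ)+(j:ℕ) = k then ∑ l, (q l).coeff i * (q l).coeff j else 0)
      = ∑ i : Fin (d+1), ∑ j : Fin (d+1), ∑ l,
        (if (i:ℕ)+(j:ℕ) = k then (q l).coeff i * (q l).coeff j else 0) := by
        refine Finset.sum_congr rfl fun i _ => Finset.sum_congr rfl fun j _ => ?_
        by_cases h : (i:ℕ)+(j:ℕ) = k <;> simp [h]
    _ = ∑ i : Fin (d+1), ∑ l, ∑ j : Fin (d+1),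
        (if (i:ℕ)+(j:ℕ) = k then (q l).coeff i * (q l).coeff j else 0) :=
        Finset.sum_congr rfl fun i _ => by rw [Finset.sum_comm]
    _ = ∑ l, ∑ i : Fin (d+1), ∑ j : Fin (d+1),
        (if (i:ℕ)+(j:ℕ) = k then (q l).coeff i * (q l).coeff j else 0) := by rw [Finset.sum_comm]
    _ = ∑ l, ((q l)^2).coeff k := Finset.sum_congr rfl fun l _ => (h1 l).symm

lemma sos_natDegree_le (d m : ℕ) (p : Polynomial ℝ) (q : Fin m → Polynomial ℝ)
    (hp : p = ∑ l, (q l) ^ 2) (hdeg : p.degree ≤ 2 * d) :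
    ∀ l, (q l).natDegree ≤ d := by
  by_contra hc
  push_neg at hc
  set M := Finset.univ.sup (fun l => (q l).natDegree) with hM
  have hdM : d < M := by
    obtain ⟨l, hl⟩ := hc
    exact lt_of_lt_of_le hl (Finset.le_sup (f := fun l => (q l).natDegree) (Finset.mem_univ l))
  have hne : (Finset.univ : Finset (Fin m)).Nonempty := by
    rcases (Finset.univ : Finset (Fin m)).eq_empty_or_nonempty with h | h
    · rw [hM, h] at hdM; simp at hdM
    · exact h
  have hMle : ∀ l, (q l).natDegree ≤ M := fun l => Finset.le_sup (f := fun l => (q l).natDegree) (Finset.mem_univ l)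
  have key : p.coeff (M + M) = ∑ l, ((q l).coeff M) ^ 2 := by
    rw [hp, Polynomial.finset_sum_coeff]
    refine Finset.sum_congr rfl fun l _ => ?_
    rw [sq, sq, Polynomial.coeff_mul]
    rw [Finset.sum_eq_single (M, M)]
    · intro x hx hx'
      simp only [Finset.HasAntidiagonal.mem_antidiagonal] at hx
      rcases lt_or_ge M x.1 with h | h
      · have : (q l).coeff x.1 = 0 :=
          Polynomial.coeff_eq_zero_of_natDegree_lt (lt_of_le_of_lt (hMle l) h)
        simp [this]
      · have h2 : M ≤ x.2 := by omega
        rcases eq_or_lt_of_le h2 with h2 | h2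
        · exfalso; apply hx'
          have : x.1 = M := by omega
          exact Prod.ext this h2.symm
        · have : (q l).coeff x.2 = 0 :=
            Polynomial.coeff_eq_zero_of_natDegree_lt (lt_of_le_of_lt (hMle l) h2)
          simp [this]
    · intro h; simp [Finset.HasAntidiagonal.mem_antidiagonal] at h
  have hzero : p.coeff (M + M) = 0 := by
    apply Polynomial.coeff_eq_zero_of_degree_lt
    refine lt_of_le_of_lt hdeg ?_
    exact_mod_cast (by omega : 2 * d < M + M)
  rw [hzero] at key
  have hall : ∀ l ∈ Finset.univ, ((q l).coeff M) ^ 2 = 0 := by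
    intro l _
    have := (Finset.sum_eq_zero_iff_of_nonneg (fun l _ => sq_nonneg ((q l).coeff M))).mp
      key.symm l (Finset.mem_univ l)
    exact this
  obtain ⟨l0, _, hl0⟩ := Finset.exists_mem_eq_sup Finset.univ hne (fun l => (q l).natDegree)
  have hc0 : (q l0).coeff M = 0 := by
    have := hall l0 (Finset.mem_univ l0)
    exact pow_eq_zero_iff (by norm_num) |>.mp this
  have : (q l0).leadingCoeff = 0 := by
    rw [Polynomial.leadingCoeff, ← hl0]; exact hc0
  have hq0 : q l0 = 0 := Polynomial.leadingCoeff_eq_zero.mp this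
  have : M = 0 := by rw [hM, hl0, hq0, Polynomial.natDegree_zero]
  omega

theorem stmt_2 (d : ℕ) (p : Polynomial ℝ) (hdeg : p.degree ≤ 2 * d) :
    (∃ (m : ℕ) (q : Fin m → Polynomial ℝ), p = ∑ i, (q i) ^ 2) ↔
    ∃ Q : Matrix (Fin (d + 1)) (Fin (d + 1)) ℝ,
      Q.IsSymm ∧
      (∀ x : Fin (d + 1) → ℝ, 0 ≤ x ⬝ᵥ Q.mulVec x) ∧
      (∀ k : ℕ, p.coeff k = ∑ i : Fin (d + 1), ∑ j : Fin (d + 1),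
        if (i : ℕ) + (j : ℕ) = k then Q i j else 0) := by
  constructor
  · rintro ⟨m, q, hp⟩
    have hq : ∀ l, (q l).natDegree ≤ d := sos_natDegree_le d m p q hp hdeg
    set c : Fin m → Fin (d+1) → ℝ := fun l i => (q l).coeff i with hc
    refine ⟨Matrix.of fun i j => ∑ l, c l i * c l j, ?_, ?_, ?_⟩
    · ext i j
      simp only [Matrix.IsSymm, Matrix.transpose_apply, Matrix.of_apply]
      exact Finset.sum_congr rfl fun l _ => mul_comm _ _
    · intro x
      have hsq : ∀ l, (∑ i, c l i * x i)^2 = ∑ i, ∑ j, x i * (c l i * c l j * x j) := by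
        intro l
        rw [sq, Finset.sum_mul_sum]
        exact Finset.sum_congr rfl fun i _ => Finset.sum_congr rfl fun j _ => by ring
      have key : x ⬝ᵥ (Matrix.of fun i j => ∑ l, c l i * c l j).mulVec x
          = ∑ l, (∑ i, c l i * x i)^2 := by
        symm
        calc ∑ l, (∑ i, c l i * x i)^2
            = ∑ l, ∑ i, ∑ j, x i * (c l i * c l j * x j) :=
              Finset.sum_congr rfl fun l _ => hsq l
          _ = ∑ i, ∑ l, ∑ j, x i * (c l i * c l j * x j) := by rw [Finset.sum_comm]
          _ = ∑ i, ∑ j, ∑ l, x i * (c l i * c l j * x j) :=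
              Finset.sum_congr rfl (fun i _ => by rw [Finset.sum_comm])
          _ = x ⬝ᵥ (Matrix.of fun i j => ∑ l, c l i * c l j).mulVec x := by
              simp only [dotProduct, Matrix.mulVec, Matrix.of_apply, Finset.mul_sum,
                Finset.sum_mul]
      rw [key]
      exact Finset.sum_nonneg fun l _ => sq_nonneg _
    · intro k
      rw [hp, gram_coeff d m q hq k]
      rfl
  · rintro ⟨Q, hsym, hpsd, hcoeff⟩
    have hQpsd : Q.PosSemidef := by
      refine Matrix.PosSemidef.of_dotProduct_mulVec_nonneg ?_ (fun x => by simpa using hpsd x)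
      rw [Matrix.IsHermitian, Matrix.conjTranspose_eq_transpose_of_trivial]
      exact hsym
    obtain ⟨B, hB⟩ : ∃ B : Matrix (Fin (d+1)) (Fin (d+1)) ℝ, Q = Bᴴ * B := by
      classical
      open MatrixOrder in exact CStarAlgebra.nonneg_iff_eq_star_mul_self.mp hQpsd.nonneg
    set q : Fin (d+1) → Polynomial ℝ := fun l => ∑ j : Fin (d+1), C (B l j) * X ^ (j:ℕ) with hqdef
    have hcoeffq : ∀ l (i : Fin (d+1)), (q l).coeff i = B l i := by
      intro l i
      rw [hqdef]
      simp only [Polynomial.finset_sum_coeff, Polynomial.coeff_C_mul, Polynomial.coeff_X_pow]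
      rw [Finset.sum_eq_single i]
      · simp
      · intro j _ hj
        have : (j : ℕ) ≠ (i : ℕ) := fun h => hj (Fin.ext h)
        simp [this, Ne.symm this]
      · simp
    have hcoeffq' : ∀ l (n : ℕ), d < n → (q l).coeff n = 0 := by
      intro l n hn
      rw [hqdef]
      simp only [Polynomial.finset_sum_coeff, Polynomial.coeff_C_mul, Polynomial.coeff_X_pow]
      apply Finset.sum_eq_zero
      intro j _
      have : (j : ℕ) ≠ n := by omega
      simp [this, Ne.symm this]
    have hqd : ∀ l, (q l).natDegree ≤ d := by
      intro l
      exact Polynomial.natDegree_le_iff_coeff_eq_zero.mpr fun n hn => hcoeffq' l n hn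
    refine ⟨d + 1, q, ?_⟩
    ext k
    rw [hcoeff k, gram_coeff d (d+1) q hqd k]
    refine Finset.sum_congr rfl fun i _ => Finset.sum_congr rfl fun j _ => ?_
    by_cases h : (i : ℕ) + (j : ℕ) = k <;> simp only [h, if_true, if_false]
    simp only [hcoeffq]
    rw [hB]
    simp [Matrix.mul_apply, Matrix.conjTranspose_apply]
end

section
/- If C is a compact Hausdorff space, μ is a finite regular Borel measure on C, f^1,…,f^k : C → [0,1] are Borel measurable functions with ∑_{j=1}^k f^j ≤ 1 pointwise, and δ > 0, then there exist continuous functions g^1,…,g^k : C → [0,1] with ∑_{j=1}^k g^j ≤ 1 pointwise and μ({x ∈ C : f^j(x) ≠ g^j(x)}) < δ for each j. -/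
open MeasureTheory ENNReal Filter Topology

set_option maxHeartbeats 1000000

/-- Lusin's theorem: a bounded measurable real function on a compact Hausdorff space
with a finite regular Borel measure agrees with a continuous function off a compact set
of small complement measure. -/
lemma lusin_compact {C : Type*} [TopologicalSpace C] [CompactSpace C] [T2Space C]
    [MeasurableSpace C] [BorelSpace C]
    (μ : Measure C) [IsFiniteMeasure μ] [μ.Regular]
    {f : C → ℝ} (hf : Measurable f) (hb : ∀ x, ‖f x‖ ≤ 1)
    {ε : ℝ≥0∞} (hε : 0 < ε) :
    ∃ K : Set C, IsCompact K ∧ μ Kᶜ < ε ∧ ContinuousOn f K := by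
  have hmem : MemLp f 1 μ :=
    MemLp.of_bound hf.aestronglyMeasurable 1 (Filter.Eventually.of_forall hb)
  -- approximating sequence of bounded continuous functions
  have hg : ∀ n : ℕ, ∃ g : BoundedContinuousFunction C ℝ, eLpNorm (f - (g : C → ℝ)) 1 μ ≤ ((n : ℝ≥0∞) + 1)⁻¹ := by
    intro n
    obtain ⟨g, hg1, -⟩ := hmem.exists_boundedContinuous_eLpNorm_sub_le ENNReal.one_ne_top
      (ε := ((n : ℝ≥0∞) + 1)⁻¹) (by simp)
    exact ⟨g, hg1⟩
  choose g hgle using hg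
  have htend : Tendsto (fun n => eLpNorm (f - (g n : C → ℝ)) 1 μ) atTop (𝓝 0) := by
    refine tendsto_of_tendsto_of_tendsto_of_le_of_le tendsto_const_nhds
      ENNReal.tendsto_inv_nat_nhds_zero (fun n => zero_le) (fun n => ?_)
    exact (hgle n).trans (ENNReal.inv_le_inv.2 (le_add_of_nonneg_right zero_le_one))
  have htendM : TendstoInMeasure μ (fun n => ((g n : C → ℝ))) atTop f := by
    refine tendstoInMeasure_of_tendsto_eLpNorm (p := 1) one_ne_zero
      (fun n => (g n).continuous.aestronglyMeasurable) hf.aestronglyMeasurable ?_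
    simpa only [eLpNorm_sub_comm] using htend
  obtain ⟨ns, -, hae⟩ := htendM.exists_seq_tendsto_ae
  -- choose a real number r with ofReal r < ε/2
  have hε2 : (0 : ℝ≥0∞) < ε / 2 := ENNReal.div_pos hε.ne' (by norm_num)
  obtain ⟨r, hr0, hrε⟩ : ∃ r : ℝ, 0 < r ∧ ENNReal.ofReal r < ε / 2 := by
    set m := min (ε / 2) 1 with hm
    have hm0 : m ≠ 0 := (lt_min hε2 zero_lt_one).ne'
    have hmtop : m ≠ ∞ := ne_top_of_le_ne_top ENNReal.one_ne_top (min_le_right _ _)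
    have hmt : 0 < m.toReal := ENNReal.toReal_pos hm0 hmtop
    refine ⟨m.toReal / 2, by positivity, ?_⟩
    calc ENNReal.ofReal (m.toReal / 2) < ENNReal.ofReal m.toReal := by
          apply ENNReal.ofReal_lt_ofReal_iff_of_nonneg (by positivity) |>.2
          linarith
      _ = m := ENNReal.ofReal_toReal hmtop
      _ ≤ ε / 2 := min_le_left _ _
  -- Egorov
  obtain ⟨t, htm, htμ, htu⟩ := MeasureTheory.tendstoUniformlyOn_of_ae_tendsto'
    (μ := μ) (fun n => ((g (ns n)).continuous).stronglyMeasurable)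
    hf.stronglyMeasurable hae hr0
  have hcont : ContinuousOn f tᶜ :=
    htu.continuousOn (Frequently.of_forall fun n => ((g (ns n)).continuous).continuousOn)
  -- inner regularity: compact subset of tᶜ
  obtain ⟨K, hKt, hKc, hKd⟩ := (htm.compl).exists_isCompact_diff_lt
    (measure_ne_top μ _) (ε := ε / 2) hε2.ne'
  refine ⟨K, hKc, ?_, hcont.mono hKt⟩
  have hsub : Kᶜ ⊆ t ∪ (tᶜ \ K) := by
    intro x hx
    by_cases hxt : x ∈ t
    · exact Or.inl hxt
    · exact Or.inr ⟨hxt, hx⟩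
  calc μ Kᶜ ≤ μ (t ∪ (tᶜ \ K)) := measure_mono hsub
    _ ≤ μ t + μ (tᶜ \ K) := measure_union_le _ _
    _ < ε / 2 + ε / 2 := by
        exact ENNReal.add_lt_add_of_le_of_lt (lt_of_le_of_lt htμ hrε).ne_top
          (le_of_lt (lt_of_le_of_lt htμ hrε)) hKd
    _ = ε := ENNReal.add_halves ε

theorem stmt_3 (C : Type*) [TopologicalSpace C] [CompactSpace C] [T2Space C]
    [MeasurableSpace C] [BorelSpace C]
    (μ : Measure C) [IsFiniteMeasure μ] [μ.Regular]
    (k : ℕ) (f : Fin k → C → ℝ)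
    (hf_meas : ∀ j, Measurable (f j))
    (hf_range : ∀ j x, f j x ∈ Set.Icc (0 : ℝ) 1)
    (hf_sum : ∀ x, ∑ j, f j x ≤ 1)
    (δ : ℝ≥0∞) (hδ : 0 < δ) :
    ∃ g : Fin k → C → ℝ,
      (∀ j, Continuous (g j)) ∧
      (∀ j x, g j x ∈ Set.Icc (0 : ℝ) 1) ∧
      (∀ x, ∑ j, g j x ≤ 1) ∧
      (∀ j, μ {x | f j x ≠ g j x} < δ) := by
  -- choose ε with (k+1) * ε ≤ δ', δ' = min δ 1
  set δ' := min δ 1 with hδ'def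
  have hδ'0 : δ' ≠ 0 := (lt_min hδ zero_lt_one).ne'
  have hδ'top : δ' ≠ ∞ := ne_top_of_le_ne_top ENNReal.one_ne_top (min_le_right _ _)
  set ε := δ' / (k + 1 : ℝ≥0∞) with hεdef
  have hε0 : 0 < ε := ENNReal.div_pos hδ'0 (by simp)
  have hεtop : ε ≠ ∞ := by
    exact (ENNReal.div_lt_top hδ'top (by simp)).ne
  -- Lusin for each j
  have hlusin : ∀ j : Fin k, ∃ K : Set C, IsCompact K ∧ μ Kᶜ < ε ∧ ContinuousOn (f j) K := by
    intro j
    exact lusin_compact μ (hf_meas j) (fun x => by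
      have := hf_range j x
      rw [Real.norm_eq_abs, abs_le]
      exact ⟨by linarith [this.1], this.2⟩) hε0
  choose K hKcomp hKμ hKcont using hlusin
  set S : Set C := ⋂ j, K j with hSdef
  have hSclosed : IsClosed S := isClosed_iInter fun j => (hKcomp j).isClosed
  have hScomp : IsCompact S := hSclosed.isCompact
  have hSμ : μ Sᶜ < δ := by
    have h1 : μ Sᶜ ≤ ∑ j, μ (K j)ᶜ := by
      rw [hSdef, Set.compl_iInter]
      exact measure_iUnion_fintype_le μ _
    have h2 : (∑ j : Fin k, μ (K j)ᶜ) ≤ ∑ _j : Fin k, ε :=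
      Finset.sum_le_sum fun j _ => (hKμ j).le
    have h3 : (∑ _j : Fin k, ε) = (k : ℝ≥0∞) * ε := by
      simp [Finset.sum_const, nsmul_eq_mul]
    have h4 : (k : ℝ≥0∞) * ε < (k + 1 : ℝ≥0∞) * ε := by
      rw [mul_comm _ ε, mul_comm _ ε]
      refine ENNReal.mul_lt_mul_right hε0.ne' hεtop ?_
      exact ENNReal.lt_add_right (by simp) one_ne_zero
    have h5 : (k + 1 : ℝ≥0∞) * ε = δ' := by
      rw [hεdef, ENNReal.mul_div_cancel' (by simp) (by simp)]
    calc μ Sᶜ ≤ ∑ j, μ (K j)ᶜ := h1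
      _ ≤ ∑ _j : Fin k, ε := h2
      _ = (k : ℝ≥0∞) * ε := h3
      _ < (k + 1 : ℝ≥0∞) * ε := h4
      _ = δ' := h5
      _ ≤ δ := min_le_left _ _
  -- Tietze extension of each f j restricted to S
  have htietze : ∀ j : Fin k, ∃ h : C(C, ℝ),
      (∀ x ∈ S, h x = f j x) ∧ ∀ y, h y ∈ Set.Icc (0:ℝ) 1 := by
    intro j
    have hcS : ContinuousOn (f j) S := (hKcont j).mono (Set.iInter_subset _ j)
    set F : C(S, ℝ) := ⟨fun x => f j x, hcS.restrict⟩ with hF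
    obtain ⟨h, hmem, hrestrict⟩ := F.exists_restrict_eq_forall_mem_of_closed
      (t := Set.Icc (0:ℝ) 1) (fun x => hf_range j x)
      (Set.nonempty_Icc.2 zero_le_one) hSclosed
    refine ⟨h, fun x hx => ?_, hmem⟩
    have := congrFun (congrArg DFunLike.coe hrestrict) ⟨x, hx⟩
    exact this
  choose h hhrestrict hhmem using htietze
  -- normalize
  set T : C → ℝ := fun x => max 1 (∑ j, h j x) with hTdef
  have hTcont : Continuous T :=
    continuous_const.max (continuous_finset_sum _ fun j _ => (h j).continuous)
  have hTpos : ∀ x, 0 < T x := fun x => lt_of_lt_of_le zero_lt_one (le_max_left _ _)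
  refine ⟨fun j x => h j x / T x, ?_, ?_, ?_, ?_⟩
  · exact fun j => (h j).continuous.div hTcont fun x => (hTpos x).ne'
  · intro j x
    constructor
    · exact div_nonneg (hhmem j x).1 (hTpos x).le
    · rw [div_le_one (hTpos x)]
      exact le_trans (hhmem j x).2 (le_max_left _ _)
  · intro x
    rw [← Finset.sum_div, div_le_one (hTpos x)]
    exact le_max_right _ _
  · intro j
    refine lt_of_le_of_lt (measure_mono ?_) hSμ
    intro x hx
    simp only [Set.mem_setOf_eq] at hx
    by_contra hxS
    simp only [Set.mem_compl_iff, not_not] at hxS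
    apply hx
    have hT1 : T x = 1 := by
      rw [hTdef]
      apply max_eq_left
      have : (∑ j, h j x) = ∑ j, f j x :=
        Finset.sum_congr rfl fun i _ => hhrestrict i x hxS
      rw [this]; exact hf_sum x
    rw [hT1, div_one, hhrestrict j x hxS]
end

section
/- If C ⊂ ℝ^d is compact, f^1,…,f^k : C → [0,1] are continuous functions with ∑_{j=1}^k f^j ≤ 1 pointwise, and δ > 0, then there exist polynomials p^1,…,p^k in d variables, each a square of a polynomial, taking values in [0,1] on C, such that |f^j(x) − p^j(x)| ≤ δ for all x ∈ C and all j, and ∑_{j=1}^k p^j(x) ≤ 1 for all x ∈ C. -/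
open MvPolynomial

lemma my_poly_approx {d : ℕ} {C : Set (Fin d → ℝ)} (hC : IsCompact C)
    (g : C → ℝ) (hg : Continuous g) (η : ℝ) (hη : 0 < η) :
    ∃ q : MvPolynomial (Fin d) ℝ,
      ∀ x : C, |MvPolynomial.eval (x : Fin d → ℝ) q - g x| < η := by
  haveI : CompactSpace C := isCompact_iff_compactSpace.mp hC
  set Xc : Fin d → C(C, ℝ) := fun i =>
    ⟨fun x => (x : Fin d → ℝ) i, (continuous_apply i).comp continuous_subtype_val⟩ with hXc
  have heval : ∀ (q : MvPolynomial (Fin d) ℝ) (x : C),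
      (MvPolynomial.aeval Xc q : C(C, ℝ)) x = MvPolynomial.eval (x : Fin d → ℝ) q := by
    intro q x
    induction q using MvPolynomial.induction_on with
    | C a => simp [hXc, Algebra.algebraMap_eq_smul_one]
    | add p q hp hq => simp [map_add, hp, hq]
    | mul_X p i hp => simp [map_mul, hp, hXc]; exact Or.inl hp
  set A : Subalgebra ℝ C(C, ℝ) := (MvPolynomial.aeval Xc).range with hA
  have hsep : A.SeparatesPoints := by
    intro x y hxy
    have : (x : Fin d → ℝ) ≠ (y : Fin d → ℝ) := fun h => hxy (Subtype.ext h)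
    obtain ⟨i, hi⟩ := Function.ne_iff.mp this
    exact ⟨Xc i, ⟨Xc i, ⟨MvPolynomial.X i, by simp⟩, rfl⟩, hi⟩
  obtain ⟨⟨gp, hmem⟩, hb⟩ :=
    ContinuousMap.exists_mem_subalgebra_near_continuous_of_separatesPoints A hsep g hg η hη
  obtain ⟨q, hq⟩ := hmem
  refine ⟨q, fun x => ?_⟩
  have := hb x
  rw [← Real.norm_eq_abs, ← heval q x, show (MvPolynomial.aeval Xc) q = gp from hq]
  exact this
theorem stmt_4 (d : ℕ) (C : Set (Fin d → ℝ)) (hC : IsCompact C)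
    (k : ℕ) (f : Fin k → (Fin d → ℝ) → ℝ)
    (hf_cont : ∀ j, ContinuousOn (f j) C)
    (hf_range : ∀ j, ∀ x ∈ C, f j x ∈ Set.Icc (0 : ℝ) 1)
    (hf_sum : ∀ x ∈ C, ∑ j, f j x ≤ 1)
    (δ : ℝ) (hδ : 0 < δ) :
    ∃ p : Fin k → MvPolynomial (Fin d) ℝ,
      (∀ j, ∃ q : MvPolynomial (Fin d) ℝ, p j = q ^ 2) ∧
      (∀ j, ∀ x ∈ C, MvPolynomial.eval x (p j) ∈ Set.Icc (0 : ℝ) 1) ∧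
      (∀ j, ∀ x ∈ C, |f j x - MvPolynomial.eval x (p j)| ≤ δ) ∧
      (∀ x ∈ C, ∑ j, MvPolynomial.eval x (p j) ≤ 1) := by
  set ε : ℝ := min (δ / 2) (1 / 2) with hε_def
  have hε_pos : 0 < ε := lt_min (by linarith) (by norm_num)
  have hε_le_half : ε ≤ 1 / 2 := min_le_right _ _
  have hε_le_δ : ε ≤ δ / 2 := min_le_left _ _
  set η : ℝ := min (δ / 2) (ε / (k + 1)) / 3 with hη_def
  have hk1 : (0 : ℝ) < (k : ℝ) + 1 := by positivity
  have hη_pos : 0 < η := by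
    apply div_pos (lt_min (by linarith) (div_pos hε_pos hk1)) (by norm_num)
  have hη_le1 : η ≤ 1 := by
    have h1 : ε / (k + 1) ≤ 1 / 2 := by
      apply div_le_of_le_mul₀ (le_of_lt hk1) (by norm_num)
      nlinarith [Nat.cast_nonneg (α := ℝ) k]
    have := min_le_right (δ / 2) (ε / (k + 1))
    rw [hη_def]; linarith
  have h3η_δ : 3 * η ≤ δ / 2 := by
    have := min_le_left (δ / 2) (ε / (k + 1)); rw [hη_def]; linarith
  have h3η_ε : 3 * η ≤ ε / (k + 1) := by
    have := min_le_right (δ / 2) (ε / (k + 1)); rw [hη_def]; linarith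
  -- the continuous square roots
  set g : Fin k → C → ℝ := fun j x => Real.sqrt ((1 - ε) * f j (x : Fin d → ℝ)) with hg_def
  have hg_cont : ∀ j, Continuous (g j) := by
    intro j
    exact Real.continuous_sqrt.comp (continuous_const.mul (hf_cont j).restrict)
  have hexists : ∀ j : Fin k, ∃ q : MvPolynomial (Fin d) ℝ,
      ∀ x : C, |MvPolynomial.eval (x : Fin d → ℝ) q - g j x| < η :=
    fun j => my_poly_approx hC (g j) (hg_cont j) η hη_pos
  choose q hq using hexists
  have key : ∀ (j : Fin k) (x : Fin d → ℝ), x ∈ C →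
      |MvPolynomial.eval x (q j ^ 2) - (1 - ε) * f j x| ≤ 3 * η := by
    intro j x hx
    set a := MvPolynomial.eval x (q j) with ha
    have hqx := hq j ⟨x, hx⟩
    have hfr := hf_range j x hx
    have hnn : 0 ≤ (1 - ε) * f j x := by
      apply mul_nonneg (by linarith) hfr.1
    have hs_sq : (g j ⟨x, hx⟩) ^ 2 = (1 - ε) * f j x := Real.sq_sqrt hnn
    have hs_nn : 0 ≤ g j ⟨x, hx⟩ := Real.sqrt_nonneg _
    have hs_le : g j ⟨x, hx⟩ ≤ 1 := by
      show Real.sqrt ((1 - ε) * f j x) ≤ 1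
      apply Real.sqrt_le_one.mpr
      nlinarith [hfr.1, hfr.2]
    set s := g j ⟨x, hx⟩
    have habs : |a - s| ≤ η := le_of_lt hqx
    rw [abs_le] at habs ⊢
    rw [map_pow, ← ha, ← hs_sq]
    constructor <;> nlinarith [sq_nonneg (a - s), habs.1, habs.2]
  have hεk : (k : ℝ) * (ε / (k + 1)) ≤ ε := by
    rw [mul_div_assoc']
    apply div_le_of_le_mul₀ (le_of_lt hk1) (le_of_lt hε_pos)
    nlinarith [Nat.cast_nonneg (α := ℝ) k]
  refine ⟨fun j => q j ^ 2, fun j => ⟨q j, rfl⟩, ?_, ?_, ?_⟩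
  · -- range in [0,1]
    intro j x hx
    have hkey := key j x hx
    have hfr := hf_range j x hx
    rw [abs_le] at hkey
    have h3 : 3 * η ≤ ε := by
      have : ε / (k + 1) ≤ ε := by
        rw [div_le_iff₀ hk1]; nlinarith [Nat.cast_nonneg (α := ℝ) k]
      linarith
    have hm : (1 - ε) * f j x ≤ 1 - ε :=
      mul_le_of_le_one_right (by linarith) hfr.2
    constructor
    · rw [map_pow]; positivity
    · linarith [hkey.1, hkey.2]
  · -- close to f
    intro j x hx
    have hkey := key j x hx
    have hfr := hf_range j x hx
    rw [abs_le] at hkey ⊢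
    have hm1 : 0 ≤ ε * f j x := mul_nonneg hε_pos.le hfr.1
    have hm2 : ε * f j x ≤ ε := mul_le_of_le_one_right hε_pos.le hfr.2
    constructor <;> [linarith [hkey.2, h3η_δ]; linarith [hkey.1, h3η_δ]]
  · -- sum bound
    intro x hx
    have hsum := hf_sum x hx
    have hbound : ∀ j : Fin k, MvPolynomial.eval x (q j ^ 2) ≤
        (1 - ε) * f j x + ε / (k + 1) := by
      intro j
      have hkey := key j x hx
      rw [abs_le] at hkey
      linarith [hkey.2]
    calc ∑ j, MvPolynomial.eval x (q j ^ 2)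
        ≤ ∑ j, ((1 - ε) * f j x + ε / (k + 1)) := Finset.sum_le_sum fun j _ => hbound j
      _ = (1 - ε) * ∑ j, f j x + (k : ℝ) * (ε / (k + 1)) := by
          rw [Finset.sum_add_distrib, ← Finset.mul_sum, Finset.sum_const, Finset.card_univ,
            Fintype.card_fin, nsmul_eq_mul]
      _ ≤ 1 := by
          have hm : (1 - ε) * ∑ j, f j x ≤ 1 - ε :=
            mul_le_of_le_one_right (by linarith) hsum
          linarith [hεk]
end

section
/- In a continuous game, if a Borel probability measure π on C satisfies ∫ [u_i(ξ_i(s_i), s_{−i}) − u_i(s)] dπ(s) ≤ ε for every player i and every Borel measurable simple (finite-range) departure function ξ_i : C_i → C_i, then π satisfies the same inequality for every Borel measurable departure function ζ_i : C_i → C_i; i.e., simple departure functions suffice to define ε-correlated equilibria. -/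
open MeasureTheory Topology Filter

open Classical in
/-- Pick the first center in the list whose `V`-ball contains `y`, defaulting to `d`. -/
noncomputable def pickCenter {α : Type*} (V : Set (α × α)) (d : α) : List α → α → α
  | [], _ => d
  | x :: xs, y => if (x, y) ∈ V then x else pickCenter V d xs y

lemma pickCenter_measurable {α : Type*} [MeasurableSpace α] (V : Set (α × α)) (d : α)
    (hV : ∀ x : α, MeasurableSet {y | (x, y) ∈ V}) (l : List α) :
    Measurable (pickCenter V d l) := by
  classical
  induction l with
  | nil =>
      have : pickCenter V d [] = fun _ => d := rfl
      rw [this]; exact measurable_const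
  | cons x xs ih =>
      have : pickCenter V d (x :: xs)
          = fun y => if (x, y) ∈ V then x else pickCenter V d xs y := rfl
      rw [this]
      exact Measurable.ite (hV x) measurable_const ih

lemma pickCenter_range_finite {α : Type*} (V : Set (α × α)) (d : α) (l : List α) :
    (Set.range (pickCenter V d l)).Finite := by
  induction l with
  | nil =>
      refine (Set.finite_singleton d).subset ?_
      rintro _ ⟨y, rfl⟩
      simp [pickCenter]
  | cons x xs ih =>
      refine (ih.insert x).subset ?_
      rintro _ ⟨y, rfl⟩
      by_cases h : (x, y) ∈ V
      · simp [pickCenter, h]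
      · simp only [pickCenter, if_neg h]
        exact Set.mem_insert_iff.mpr (Or.inr ⟨y, rfl⟩)

lemma pickCenter_mem {α : Type*} (V : Set (α × α)) (d : α) (l : List α) (y : α)
    (hy : ∃ x ∈ l, (x, y) ∈ V) : (pickCenter V d l y, y) ∈ V := by
  induction l with
  | nil => simp at hy
  | cons x xs ih =>
      by_cases h : (x, y) ∈ V
      · simpa [pickCenter, h] using h
      · simp only [pickCenter, if_neg h]
        refine ih ?_
        rcases hy with ⟨z, hz, hzV⟩
        rcases List.mem_cons.mp hz with rfl | hz'
        · exact absurd hzV h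
        · exact ⟨z, hz', hzV⟩


/-- On a finite product of compact Hausdorff Borel spaces, every continuous real-valued
function is measurable with respect to the product sigma-algebra, by Stone-Weierstrass. -/
lemma measurable_of_continuous_pi {n : ℕ} {C : Fin n → Type*}
    [∀ i, TopologicalSpace (C i)] [∀ i, CompactSpace (C i)] [∀ i, T2Space (C i)]
    [∀ i, MeasurableSpace (C i)] [∀ i, BorelSpace (C i)]
    {f : (∀ i, C i) → ℝ} (hf : Continuous f) : Measurable f := by
  set S : Set C(∀ i, C i, ℝ) :=
    {g | ∃ (j : Fin n) (h : C(C j, ℝ)), g = h.comp ⟨fun s => s j, continuous_apply j⟩} with hS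
  set A : Subalgebra ℝ C(∀ i, C i, ℝ) := Algebra.adjoin ℝ S with hA
  have hsep : A.SeparatesPoints := by
    intro x y hxy
    obtain ⟨j, hj⟩ : ∃ j, x j ≠ y j := by
      by_contra h
      push_neg at h
      exact hxy (funext h)
    obtain ⟨g, hg0, hg1, -⟩ := exists_continuous_zero_one_of_isClosed
      (isClosed_singleton (x := x j)) (isClosed_singleton (x := y j))
      (Set.disjoint_singleton.mpr hj)
    refine ⟨_, ⟨g.comp ⟨fun s => s j, continuous_apply j⟩,
      Algebra.subset_adjoin ⟨j, g, rfl⟩, rfl⟩, ?_⟩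
    have h0 : g (x j) = 0 := hg0 rfl
    have h1 : g (y j) = 1 := hg1 rfl
    simp only [ContinuousMap.comp_apply, ContinuousMap.coe_mk]
    rw [h0, h1]
    exact zero_ne_one
  have hmeasA : ∀ g : C(∀ i, C i, ℝ), g ∈ A → Measurable (g : (∀ i, C i) → ℝ) := by
    intro g hg
    induction hg using Algebra.adjoin_induction with
    | mem g hgS =>
        obtain ⟨j, h, rfl⟩ := hgS
        exact h.continuous.measurable.comp (measurable_pi_apply j)
    | algebraMap r => exact measurable_const
    | add a b ha hb iha ihb => exact iha.add ihb
    | mul a b ha hb iha ihb => exact iha.mul ihb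
  have hmem : (⟨f, hf⟩ : C(∀ i, C i, ℝ)) ∈ A.topologicalClosure := by
    rw [ContinuousMap.subalgebra_topologicalClosure_eq_top_of_separatesPoints A hsep]
    trivial
  have hclos : (⟨f, hf⟩ : C(∀ i, C i, ℝ)) ∈ closure (A : Set C(∀ i, C i, ℝ)) := hmem
  obtain ⟨g, hgA, hgconv⟩ := mem_closure_iff_seq_limit.mp hclos
  have hpt : ∀ s : ∀ i, C i, Filter.Tendsto (fun m => g m s) Filter.atTop (𝓝 (f s)) := by
    intro s
    exact ((continuous_eval_const s).tendsto _).comp hgconv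
  exact measurable_of_tendsto_metrizable (fun m => hmeasA (g m) (hgA m))
    (tendsto_pi_nhds.mpr hpt)

theorem stmt_6 (n : ℕ) (C : Fin n → Type*)
    [∀ i, TopologicalSpace (C i)] [∀ i, CompactSpace (C i)] [∀ i, T2Space (C i)]
    [∀ i, MeasurableSpace (C i)] [∀ i, BorelSpace (C i)]
    (u : Fin n → (∀ i, C i) → ℝ) (hu : ∀ i, Continuous (u i))
    (π : Measure (∀ i, C i)) [IsProbabilityMeasure π] [π.Regular]
    (ε : ℝ) (hε : 0 ≤ ε)
    (hsimple : ∀ i, ∀ ξ : C i → C i, Measurable ξ → (Set.range ξ).Finite →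
      ∫ s, (u i (Function.update s i (ξ (s i))) - u i s) ∂π ≤ ε) :
    ∀ i, ∀ ζ : C i → C i, Measurable ζ →
      ∫ s, (u i (Function.update s i (ζ (s i))) - u i s) ∂π ≤ ε := by
  intro i ζ hζ
  -- the strategy space is nonempty since π is a probability measure
  have hne : Nonempty (∀ j, C j) := by
    by_contra h
    rw [not_nonempty_iff] at h
    have h1 : π Set.univ = 1 := measure_univ
    rw [Set.univ_eq_empty_iff.mpr h, measure_empty] at h1
    exact zero_ne_one h1
  obtain ⟨s₀⟩ := hne
  set d : C i := s₀ i with hd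
  -- a uniform bound on `u i`
  obtain ⟨M, hM⟩ : ∃ M : ℝ, ∀ s, |u i s| ≤ M := by
    obtain ⟨M, hM⟩ := (isCompact_range ((hu i).abs)).bddAbove
    exact ⟨M, fun s => hM (Set.mem_range_self s)⟩
  -- integrability of deviation payoffs for measurable departure functions
  have hint : ∀ η : C i → C i, Measurable η →
      Integrable (fun s => u i (Function.update s i (η (s i))) - u i s) π := by
    intro η hη
    have hm : Measurable fun s : ∀ j, C j => Function.update s i (η (s i)) := by
      apply measurable_pi_lambda
      intro j
      rcases eq_or_ne j i with rfl | h
      · simpa [Function.comp_def] using hη.comp (measurable_pi_apply j)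
      · simpa [Function.update_of_ne h] using measurable_pi_apply j
    have hmeas : Measurable fun s => u i (Function.update s i (η (s i))) - u i s :=
      ((measurable_of_continuous_pi (hu i)).comp hm).sub (measurable_of_continuous_pi (hu i))
    refine Integrable.mono' (integrable_const (M + M)) hmeas.aestronglyMeasurable ?_
    filter_upwards with s
    calc ‖u i (Function.update s i (η (s i))) - u i s‖
        ≤ ‖u i (Function.update s i (η (s i)))‖ + ‖u i s‖ := norm_sub_le _ _
      _ ≤ M + M := add_le_add (hM _) (hM _)
  refine le_of_forall_pos_le_add fun δ hδ => ?_
  -- the "uniform closeness" relation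
  set V : Set (C i × C i) :=
    {q | ∀ s : ∀ j, C j, |u i (Function.update s i q.1) - u i (Function.update s i q.2)| < δ}
    with hV
  -- each section of V is open
  have hOopen : ∀ x : C i, IsOpen {y | (x, y) ∈ V} := by
    intro x
    rw [isOpen_iff_forall_mem_open]
    intro y₀ hy₀
    have hG : IsOpen {p : C i × (∀ j, C j) |
        |u i (Function.update p.2 i x) - u i (Function.update p.2 i p.1)| < δ} := by
      have hc : Continuous fun p : C i × (∀ j, C j) =>
          |u i (Function.update p.2 i x) - u i (Function.update p.2 i p.1)| := by
        apply Continuous.abs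
        exact ((hu i).comp (continuous_snd.update i continuous_const)).sub
          ((hu i).comp (continuous_snd.update i continuous_fst))
      exact isOpen_lt hc continuous_const
    have hsub : ({y₀} : Set (C i)) ×ˢ (Set.univ : Set (∀ j, C j)) ⊆
        {p : C i × (∀ j, C j) |
          |u i (Function.update p.2 i x) - u i (Function.update p.2 i p.1)| < δ} := by
      rintro ⟨y, s⟩ ⟨hy, -⟩
      rcases hy with rfl
      exact hy₀ s
    obtain ⟨U, W, hUopen, -, hy₀U, hunivW, hUW⟩ :=
      generalized_tube_lemma isCompact_singleton isCompact_univ hG hsub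
    refine ⟨U, ?_, hUopen, hy₀U rfl⟩
    intro y hy s
    exact hUW (Set.mk_mem_prod hy (hunivW (Set.mem_univ s)))
  -- every point is in its own section
  have hself : ∀ x : C i, (x, x) ∈ V := by
    intro x s
    simpa using hδ
  -- extract a finite subcover
  obtain ⟨t, hcover⟩ := isCompact_univ.elim_finite_subcover (fun x : C i => {y | (x, y) ∈ V})
    hOopen (fun y _ => Set.mem_iUnion.mpr ⟨y, hself y⟩)
  -- the simple departure function
  set r : C i → C i := pickCenter V d t.toList with hr
  set ξ : C i → C i := fun y => r (ζ y) with hξ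
  have hξm : Measurable ξ := by
    refine (pickCenter_measurable V d ?_ t.toList).comp hζ
    intro x
    exact (hOopen x).measurableSet
  have hξfin : (Set.range ξ).Finite :=
    (pickCenter_range_finite V d t.toList).subset (Set.range_comp_subset_range ζ r)
  have Hs := hsimple i ξ hξm hξfin
  -- pointwise comparison
  have hpt : ∀ s : ∀ j, C j, u i (Function.update s i (ζ (s i))) - u i s ≤
      (u i (Function.update s i (ξ (s i))) - u i s) + δ := by
    intro s
    have hy : ∃ x ∈ t.toList, (x, ζ (s i)) ∈ V := by
      have h1 := hcover (Set.mem_univ (ζ (s i)))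
      rw [Set.mem_iUnion₂] at h1
      obtain ⟨x, hx, hxV⟩ := h1
      exact ⟨x, Finset.mem_toList.mpr hx, hxV⟩
    have h1 : (ξ (s i), ζ (s i)) ∈ V := pickCenter_mem V d t.toList (ζ (s i)) hy
    have h2 := h1 s
    have h3 := (abs_lt.mp h2).1
    linarith
  calc ∫ s, (u i (Function.update s i (ζ (s i))) - u i s) ∂π
      ≤ ∫ s, ((u i (Function.update s i (ξ (s i))) - u i s) + δ) ∂π :=
        integral_mono (hint ζ hζ) ((hint ξ hξm).add (integrable_const δ)) hpt
    _ = (∫ s, (u i (Function.update s i (ξ (s i))) - u i s) ∂π) + δ := by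
        rw [integral_add (hint ξ hξm) (integrable_const δ), integral_const, probReal_univ,
          smul_eq_mul, one_mul]
    _ ≤ ε + δ := by linarith
end

section
/- In a continuous game with finitely many players, a probability measure π is an ε-correlated equilibrium if and only if for every player i, positive integer k, strategies t_i^1,…,t_i^k ∈ C_i, and continuous functions f_i^1,…,f_i^k : C_i → [0,1] with ∑_{j=1}^k f_i^j ≤ 1 pointwise, the inequality ∑_{j=1}^k ∫ f_i^j(s_i)[u_i(t_i^j, s_{−i}) − u_i(s)] dπ(s) ≤ ε holds. -/
open MeasureTheory Set

-- shrink an open set around a preimage-of-compact to a preimage of an open set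
lemma aux_shrink {Z Y : Type*} [TopologicalSpace Z] [TopologicalSpace Y]
    [CompactSpace Z] [T2Space Y] (e : Z → Y) (he : Continuous e)
    (L : Set Y) (W : Set Z) (hW : IsOpen W) (h : e ⁻¹' L ⊆ W) :
    ∃ V : Set Y, IsOpen V ∧ L ⊆ V ∧ e ⁻¹' V ⊆ W := by
  refine ⟨(e '' Wᶜ)ᶜ, ?_, ?_, ?_⟩
  · exact (((hW.isClosed_compl).isCompact).image he).isClosed.isOpen_compl
  · intro x hx hmem
    obtain ⟨z, hz, rfl⟩ := hmem
    exact hz (h hx)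
  · intro z hz
    by_contra hzW
    exact hz ⟨z, hzW, rfl⟩

-- uniform cover lemma
lemma aux_cover {Y Z : Type*} [TopologicalSpace Y] [TopologicalSpace Z]
    [CompactSpace Y] [CompactSpace Z] [T2Space Y] [Nonempty Y]
    (Φ : Y → Z → ℝ) (hΦ : Continuous fun p : Y × Z => Φ p.1 p.2)
    {δ : ℝ} (hδ : 0 < δ) :
    ∃ (k : ℕ) (_ : 0 < k) (t : Fin k → Y) (U : Fin k → Set Y),
      (∀ j, IsOpen (U j)) ∧ (univ ⊆ ⋃ j, U j) ∧
      ∀ j y z, y ∈ U j → |Φ y z - Φ (t j) z| ≤ δ := by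
  set U : Y → Set Y := fun t => ((fun p : Y × Z => p.1) '' {p : Y × Z | δ ≤ |Φ p.1 p.2 - Φ t p.2|})ᶜ with hU
  have hUopen : ∀ t, IsOpen (U t) := by
    intro t
    have hclosed : IsClosed {p : Y × Z | δ ≤ |Φ p.1 p.2 - Φ t p.2|} := by
      have : Continuous fun p : Y × Z => |Φ p.1 p.2 - Φ t p.2| := by
        apply Continuous.abs
        exact hΦ.sub (hΦ.comp (.prodMk continuous_const continuous_snd))
      exact isClosed_le continuous_const this
    exact ((hclosed.isCompact.image continuous_fst).isClosed).isOpen_compl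
  have hmem : ∀ t, t ∈ U t := by
    intro t hmem
    obtain ⟨p, hp, hp1⟩ := hmem
    rw [← hp1] at hp
    simp at hp
    linarith
  have hcover : univ ⊆ ⋃ t, U t := fun t _ => mem_iUnion.2 ⟨t, hmem t⟩
  obtain ⟨T, hT⟩ := isCompact_univ.elim_finite_subcover U hUopen hcover
  have hTne : T.Nonempty := by
    by_contra hTe
    rw [Finset.not_nonempty_iff_eq_empty] at hTe
    obtain ⟨y⟩ := (inferInstance : Nonempty Y)
    have := hT (mem_univ y)
    simp [hTe] at this
  refine ⟨T.card, Finset.card_pos.2 hTne, fun j => (T.equivFin.symm j : Y),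
    fun j => U (T.equivFin.symm j : Y), fun j => hUopen _, ?_, ?_⟩
  · intro y hy
    obtain ⟨t, ht⟩ := mem_iUnion₂.1 (hT hy)
    simp only [mem_iUnion] at ht ⊢
    obtain ⟨htT, hyt⟩ := ht
    exact ⟨T.equivFin ⟨t, htT⟩, by simpa using hyt⟩
  · intro j y z hy
    by_contra hcon
    push_neg at hcon
    exact hy ⟨(y, z), le_of_lt hcon, rfl⟩

-- measurability of findGreatest
lemma aux_findGreatest_meas {α : Type*} [MeasurableSpace α] (F : ℕ → α → ℝ) (r : ℝ)
    (hF : ∀ m, Measurable (F m)) (N : ℕ) :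
    Measurable fun x => Nat.findGreatest (fun m => F m x ≤ r) N := by
  induction N with
  | zero => simpa using measurable_const
  | succ N ih =>
    have : (fun x => Nat.findGreatest (fun m => F m x ≤ r) (N + 1)) =
        Set.piecewise {x | F (N+1) x ≤ r} (fun _ => N + 1)
          (fun x => Nat.findGreatest (fun m => F m x ≤ r) N) := by
      funext x
      by_cases h : F (N+1) x ≤ r
      · simp [Nat.findGreatest_succ, h, Set.piecewise, Set.mem_setOf_eq]
      · simp [Nat.findGreatest_succ, h, Set.piecewise, Set.mem_setOf_eq]
    rw [this]
    exact Measurable.piecewise (measurableSet_le (hF _) measurable_const) measurable_const ih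


/-- Continuous real functions on a compact product are measurable w.r.t. the product σ-algebra. -/
lemma aux_cont_meas {n : ℕ} {C : Fin n → Type*}
    [∀ i, TopologicalSpace (C i)] [∀ i, CompactSpace (C i)] [∀ i, T2Space (C i)]
    [∀ i, MeasurableSpace (C i)] [∀ i, BorelSpace (C i)]
    {φ : (∀ i, C i) → ℝ} (hφ : Continuous φ) : Measurable φ := by
  classical
  set gen : Set C((∀ i, C i), ℝ) :=
    ⋃ i, Set.range (fun g : C(C i, ℝ) =>
      g.comp ⟨fun s => s i, continuous_apply i⟩) with hgen
  set A : Subalgebra ℝ C((∀ i, C i), ℝ) := Algebra.adjoin ℝ gen with hA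
  have hsep : A.SeparatesPoints := by
    intro x y hxy
    obtain ⟨i, hi⟩ := Function.ne_iff.1 hxy
    obtain ⟨g, hg0, hg1, -⟩ := exists_continuous_zero_one_of_isClosed
      (isClosed_singleton (x := x i)) (isClosed_singleton (x := y i))
      (by simp [Set.disjoint_singleton, hi])
    refine ⟨_, ⟨g.comp ⟨fun s => s i, continuous_apply i⟩,
      Algebra.subset_adjoin (Set.mem_iUnion.2 ⟨i, Set.mem_range_self g⟩), rfl⟩, ?_⟩
    simp only [ContinuousMap.comp_apply, ContinuousMap.coe_mk]
    rw [hg0 (mem_singleton _), hg1 (mem_singleton _)]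
    norm_num
  have hAmeas : ∀ f : C((∀ i, C i), ℝ), f ∈ A → Measurable f := by
    intro f hf
    induction hf using Algebra.adjoin_induction with
    | mem f hfg =>
      obtain ⟨S, ⟨i, rfl⟩, hfS⟩ := hfg
      obtain ⟨g, rfl⟩ := hfS
      exact g.continuous.measurable.comp (measurable_pi_apply i)
    | algebraMap r =>
      have : ⇑(algebraMap ℝ C((∀ i, C i), ℝ) r) = fun _ => r := rfl
      rw [this]; exact measurable_const
    | add f g _ _ hf hg => rw [ContinuousMap.coe_add]; exact hf.add hg
    | mul f g _ _ hf hg => rw [ContinuousMap.coe_mul]; exact hf.mul hg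
  -- approximate φ by elements of A
  have happrox : ∀ m : ℕ, ∃ g : C((∀ i, C i), ℝ), Measurable g ∧
      ∀ x, |g x - φ x| ≤ 1 / (m + 1) := by
    intro m
    obtain ⟨g, hg⟩ := ContinuousMap.exists_mem_subalgebra_near_continuousMap_of_separatesPoints
      A hsep ⟨φ, hφ⟩ (1 / (m + 1)) (by positivity)
    refine ⟨g, hAmeas _ g.2, fun x => ?_⟩
    calc |(g : C((∀ i, C i), ℝ)) x - φ x|
        = |((g : C((∀ i, C i), ℝ)) - ⟨φ, hφ⟩) x| := by simp
      _ ≤ ‖(g : C((∀ i, C i), ℝ)) - ⟨φ, hφ⟩‖ := by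
          rw [← Real.norm_eq_abs]
          exact ContinuousMap.norm_coe_le_norm _ x
      _ ≤ 1 / (m + 1) := le_of_lt hg
  choose gs hgsm hgsa using happrox
  apply measurable_of_tendsto_metrizable hgsm
  rw [tendsto_pi_nhds]
  intro x
  rw [Metric.tendsto_atTop]
  intro δ hδ
  obtain ⟨m0, hm0⟩ := exists_nat_one_div_lt (ε := δ) hδ
  refine ⟨m0, fun m hm => ?_⟩
  rw [Real.dist_eq]
  calc |gs m x - φ x| ≤ 1 / (m + 1) := hgsa m x
    _ ≤ 1 / (m0 + 1) := by
        apply div_le_div_of_nonneg_left one_pos.le (by positivity)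
        exact_mod_cast Nat.succ_le_succ hm
    _ < δ := hm0

lemma aux_forward (n : ℕ) (C : Fin n → Type*)
    [∀ i, TopologicalSpace (C i)] [∀ i, CompactSpace (C i)] [∀ i, T2Space (C i)]
    [∀ i, MeasurableSpace (C i)] [∀ i, BorelSpace (C i)]
    (u : Fin n → (∀ i, C i) → ℝ) (hu : ∀ i, Continuous (u i))
    (π : Measure (∀ i, C i)) [IsProbabilityMeasure π] [π.Regular]
    (ε : ℝ)
    (hyp : ∀ i, ∀ ζ : C i → C i, Measurable ζ →
      ∫ s, (u i (Function.update s i (ζ (s i))) - u i s) ∂π ≤ ε) :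
    ∀ i, ∀ k : ℕ, 0 < k → ∀ t : Fin k → C i, ∀ f : Fin k → C i → ℝ,
      (∀ j, Continuous (f j)) →
      (∀ j x, f j x ∈ Set.Icc (0 : ℝ) 1) →
      (∀ x, ∑ j, f j x ≤ 1) →
      ∑ j, ∫ s, f j (s i) * (u i (Function.update s i (t j)) - u i s) ∂π ≤ ε := by
  intro i k hk t f hfc hfIcc hfsum
  classical
  have hCne : Nonempty (∀ i, C i) := by
    by_contra hne
    rw [not_nonempty_iff] at hne
    have := measure_univ (μ := π)
    simp [Set.univ_eq_empty_iff.2 hne] at this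
  -- the gain functions
  set g : Fin k → (∀ i, C i) → ℝ :=
    fun j s => u i (Function.update s i (t j)) - u i s with hg
  have hupdc : ∀ y : C i, Continuous fun s : ∀ i, C i => Function.update s i y :=
    fun y => (continuous_update i).comp (continuous_id.prodMk continuous_const)
  have hgc : ∀ j, Continuous (g j) := fun j => ((hu i).comp (hupdc (t j))).sub (hu i)
  obtain ⟨B, hB⟩ := isCompact_univ.exists_bound_of_continuousOn (hu i).continuousOn
  set M : ℝ := 2 * B with hMdef
  have hgM : ∀ j s, |g j s| ≤ M := by
    intro j s
    have h1 := hB _ (mem_univ (Function.update s i (t j)))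
    have h2 := hB _ (mem_univ s)
    simp only [Real.norm_eq_abs] at h1 h2
    rw [hg, hMdef]
    calc |u i (Function.update s i (t j)) - u i s|
        ≤ |u i (Function.update s i (t j))| + |u i s| := abs_sub _ _
      _ ≤ 2 * B := by linarith
  -- partial sums
  set f' : ℕ → C i → ℝ := fun m x => if h : m < k then f ⟨m, h⟩ x else 0 with hf'
  set F : ℕ → C i → ℝ := fun m x => ∑ l ∈ Finset.range m, f' l x with hF
  have hf'nonneg : ∀ m x, 0 ≤ f' m x := by
    intro m x; rw [hf']; dsimp only
    split
    · exact (hfIcc _ x).1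
    · exact le_refl 0
  have hf'cont : ∀ m, Continuous (f' m) := by
    intro m; rw [hf']; dsimp only
    split
    · exact hfc _
    · exact continuous_const
  have hFcont : ∀ m, Continuous (F m) := by
    intro m
    exact continuous_finset_sum _ fun l _ => hf'cont l
  have hFmono : ∀ x, Monotone fun m => F m x := by
    intro x m m' hmm'
    exact Finset.sum_le_sum_of_subset_of_nonneg (Finset.range_subset_range.2 hmm')
      fun l _ _ => hf'nonneg l x
  have hF0 : ∀ x, F 0 x = 0 := fun x => by simp [hF]
  have hFnonneg : ∀ m x, 0 ≤ F m x := fun m x => by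
    rw [← hF0 x]; exact hFmono x (Nat.zero_le m)
  have hFsucc : ∀ m x, F (m+1) x = F m x + f' m x := fun m x => by
    rw [hF]; exact Finset.sum_range_succ _ m
  have hFk : ∀ x, F k x = ∑ j : Fin k, f j x := by
    intro x
    show (∑ l ∈ Finset.range k, f' l x) = _
    rw [← Fin.sum_univ_eq_sum_range (fun l => f' l x) k]
    apply Finset.sum_congr rfl
    intro j _
    rw [hf']
    simp [j.isLt]
  have hFk1 : ∀ x, F k x ≤ 1 := fun x => (hFk x) ▸ hfsum x
  -- the selector and departure functions
  set jsel : ℝ → C i → ℕ :=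
    fun r x => Nat.findGreatest (fun m => F m x ≤ r) (k-1) with hjsel
  have hjle : ∀ r x, jsel r x ≤ k - 1 := fun r x => Nat.findGreatest_le _
  set T : ℕ → C i := fun m => t ⟨min m (k-1), by omega⟩ with hT
  set ζr : ℝ → C i → C i :=
    fun r x => if 0 ≤ r ∧ r < F k x then T (jsel r x) else x with hζr
  have hζmeas : ∀ r, Measurable (ζr r) := by
    intro r
    have heq : ζr r = Set.piecewise {x | 0 ≤ r ∧ r < F k x}
        (fun x => T (jsel r x)) id := by
      funext x
      rw [hζr]
      simp only [Set.piecewise, Set.mem_setOf_eq, id]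
    rw [heq]
    have hS : MeasurableSet {x : C i | 0 ≤ r ∧ r < F k x} := by
      by_cases h0 : (0:ℝ) ≤ r
      · simp only [h0, true_and]
        exact measurableSet_lt measurable_const (hFcont k).measurable
      · simp only [h0, false_and]
        exact MeasurableSet.empty
    exact Measurable.piecewise hS
      ((measurable_from_nat (f := T)).comp
        (aux_findGreatest_meas F r (fun m => (hFcont m).measurable) (k-1)))
      measurable_id
  have hspec : ∀ r : ℝ, 0 ≤ r → ∀ x, r < F k x →
      F (jsel r x) x ≤ r ∧ r < F (jsel r x + 1) x := by
    intro r hr0 x hrk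
    constructor
    · exact Nat.findGreatest_spec (P := fun m => F m x ≤ r) (Nat.zero_le _)
        (by simpa [hF0 x] using hr0)
    · rcases eq_or_lt_of_le (hjle r x) with heq | hlt
      · have : jsel r x + 1 = k := by omega
        rw [this]; exact hrk
      · have h2 : jsel r x + 1 ≤ k - 1 := by omega
        have := Nat.findGreatest_is_greatest (P := fun m => F m x ≤ r)
          (Nat.lt_succ_self (jsel r x)) h2
        exact lt_of_not_ge this
  have huniq : ∀ r : ℝ, 0 ≤ r → ∀ x, r < F k x → ∀ j : Fin k,
      F (j:ℕ) x ≤ r → r < F ((j:ℕ)+1) x → (j : ℕ) = jsel r x := by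
    intro r hr0 x hrk j hj1 hj2
    obtain ⟨hm1, hm2⟩ := hspec r hr0 x hrk
    by_contra hne
    rcases lt_or_gt_of_ne hne with hlt | hgt
    · have : F ((j:ℕ)+1) x ≤ F (jsel r x) x := hFmono x (by omega)
      linarith
    · have : F (jsel r x + 1) x ≤ F (j:ℕ) x := hFmono x (by omega)
      linarith
  -- the auxiliary function h
  set μ0 : Measure ℝ := volume.restrict (Set.Ico (0:ℝ) 1) with hμ0
  haveI : IsFiniteMeasure μ0 := by
    constructor
    rw [hμ0, Measure.restrict_apply_univ, Real.volume_Ico]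
    exact ENNReal.ofReal_lt_top
  set h : ℝ → (∀ i, C i) → ℝ := fun r s =>
    ∑ j : Fin k, if F (j:ℕ) (s i) ≤ r ∧ r < F ((j:ℕ)+1) (s i) then g j s else 0
    with hh
  -- Claim A : inner integral over r
  have claimA : ∀ s, ∫ r, h r s ∂μ0 = ∑ j : Fin k, f j (s i) * g j s := by
    intro s
    rw [hh]
    dsimp only
    rw [integral_finset_sum]
    · apply Finset.sum_congr rfl
      intro j _
      have hind : (fun r => if F (j:ℕ) (s i) ≤ r ∧ r < F ((j:ℕ)+1) (s i)
          then g j s else 0)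
          = Set.indicator (Set.Ico (F (j:ℕ) (s i)) (F ((j:ℕ)+1) (s i)))
            (fun _ => g j s) := by
        funext r
        simp [Set.indicator, Set.mem_Ico]
      rw [hind, integral_indicator_const _ measurableSet_Ico]
      have hsub : Set.Ico (F (j:ℕ) (s i)) (F ((j:ℕ)+1) (s i)) ⊆ Set.Ico (0:ℝ) 1 :=
        Set.Ico_subset_Ico (hFnonneg _ _)
          (le_trans (hFmono (s i) (by omega : (j:ℕ)+1 ≤ k)) (hFk1 (s i)))
      rw [measureReal_def, hμ0, Measure.restrict_apply measurableSet_Ico,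
        Set.inter_eq_left.2 hsub, Real.volume_Ico,
        ENNReal.toReal_ofReal (by
          have := hFmono (s i) (Nat.le_succ (j:ℕ)); linarith)]
      rw [hFsucc]
      have : f' (j:ℕ) (s i) = f j (s i) := by rw [hf']; simp [j.isLt]
      rw [smul_eq_mul]
      ring_nf
      rw [this]
      ring
    · intro j _
      have hind : (fun r => if F (j:ℕ) (s i) ≤ r ∧ r < F ((j:ℕ)+1) (s i)
          then g j s else 0)
          = Set.indicator (Set.Ico (F (j:ℕ) (s i)) (F ((j:ℕ)+1) (s i)))
            (fun _ => g j s) := by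
        funext r
        simp [Set.indicator, Set.mem_Ico]
      rw [hind]
      rw [integrable_indicator_iff measurableSet_Ico]
      exact integrableOn_const
  -- Claim B : pointwise identity in r
  have claimB : ∀ r ∈ Set.Ico (0:ℝ) 1, ∀ s,
      h r s = u i (Function.update s i (ζr r (s i))) - u i s := by
    intro r hr s
    obtain ⟨hr0, _⟩ := hr
    by_cases hrk : r < F k (s i)
    · obtain ⟨hm1, hm2⟩ := hspec r hr0 (s i) hrk
      have hmlt : jsel r (s i) < k := by have := hjle r (s i); omega
      set j0 : Fin k := ⟨jsel r (s i), hmlt⟩ with hj0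
      have hsum : h r s = g j0 s := by
        rw [hh]
        dsimp only
        rw [Finset.sum_eq_single j0]
        · rw [if_pos]
          exact ⟨hm1, hm2⟩
        · intro b _ hb
          rw [if_neg]
          intro ⟨hb1, hb2⟩
          exact hb (Fin.ext (huniq r hr0 (s i) hrk b hb1 hb2))
        · intro habs
          exact absurd (Finset.mem_univ j0) habs
      rw [hsum]
      have hζ : ζr r (s i) = t j0 := by
        rw [hζr]
        dsimp only
        rw [if_pos ⟨hr0, hrk⟩]
        show T (jsel r (s i)) = t j0
        rw [hT]
        dsimp only
        congr 1
        apply Fin.ext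
        show min (jsel r (s i)) (k-1) = jsel r (s i)
        exact min_eq_left (hjle r (s i))
      rw [hζ]
    · have hsum : h r s = 0 := by
        rw [hh]
        dsimp only
        apply Finset.sum_eq_zero
        intro j _
        rw [if_neg]
        intro ⟨_, hj2⟩
        exact hrk (lt_of_lt_of_le hj2 (hFmono (s i) (by omega : (j:ℕ)+1 ≤ k)))
      have hζ : ζr r (s i) = s i := by
        rw [hζr]
        dsimp only
        rw [if_neg]
        intro ⟨_, habs⟩
        exact hrk habs
      rw [hsum, hζ, Function.update_eq_self]
      ring
  -- Claim C : integrability of uncurried h on the product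
  have claimC : Integrable (Function.uncurry fun s r => h r s) (π.prod μ0) := by
    have : (Function.uncurry fun s r => h r s) = fun p : (∀ i, C i) × ℝ =>
        ∑ j : Fin k, if F (j:ℕ) (p.1 i) ≤ p.2 ∧ p.2 < F ((j:ℕ)+1) (p.1 i)
          then g j p.1 else 0 := by
      funext p
      rw [Function.uncurry]
    rw [this]
    apply integrable_finset_sum
    intro j _
    have hSm : MeasurableSet {p : (∀ i, C i) × ℝ |
        F (j:ℕ) (p.1 i) ≤ p.2 ∧ p.2 < F ((j:ℕ)+1) (p.1 i)} := by
      apply MeasurableSet.inter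
      · exact measurableSet_le
          ((hFcont _).measurable.comp ((measurable_pi_apply i).comp measurable_fst))
          measurable_snd
      · exact measurableSet_lt measurable_snd
          ((hFcont _).measurable.comp ((measurable_pi_apply i).comp measurable_fst))
    have hind : (fun p : (∀ i, C i) × ℝ =>
        if F (j:ℕ) (p.1 i) ≤ p.2 ∧ p.2 < F ((j:ℕ)+1) (p.1 i) then g j p.1 else 0)
        = Set.indicator {p : (∀ i, C i) × ℝ |
            F (j:ℕ) (p.1 i) ≤ p.2 ∧ p.2 < F ((j:ℕ)+1) (p.1 i)}
          (fun p => g j p.1) := by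
      funext p
      simp [Set.indicator, Set.mem_setOf_eq]
    rw [hind]
    rw [integrable_indicator_iff hSm]
    apply Integrable.integrableOn
    refine ⟨((aux_cont_meas (hgc j)).comp measurable_fst).aestronglyMeasurable, ?_⟩
    apply MeasureTheory.HasFiniteIntegral.of_bounded (C := M)
    filter_upwards with p
    rw [Real.norm_eq_abs]
    exact hgM j p.1
  -- main chain
  calc ∑ j : Fin k, ∫ s, f j (s i) * g j s ∂π
      = ∫ s, ∑ j : Fin k, f j (s i) * g j s ∂π := by
        rw [integral_finset_sum]
        intro j _
        refine ⟨(((hfc j).measurable.comp (measurable_pi_apply i)).mul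
          (aux_cont_meas (hgc j))).aestronglyMeasurable, ?_⟩
        apply MeasureTheory.HasFiniteIntegral.of_bounded (C := M)
        filter_upwards with s
        rw [Real.norm_eq_abs, abs_mul]
        have h1 : |f j (s i)| ≤ 1 := by
          rw [abs_le]
          obtain ⟨ha, hb⟩ := hfIcc j (s i)
          constructor <;> linarith
        calc |f j (s i)| * |g j s| ≤ 1 * |g j s| :=
              mul_le_mul_of_nonneg_right h1 (abs_nonneg _)
          _ = |g j s| := one_mul _
          _ ≤ M := hgM j s
    _ = ∫ s, ∫ r, h r s ∂μ0 ∂π := by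
        apply integral_congr_ae
        filter_upwards with s
        exact (claimA s).symm
    _ = ∫ r, ∫ s, h r s ∂π ∂μ0 := integral_integral_swap claimC
    _ ≤ ε := by
        have hone : (μ0 Set.univ).toReal = 1 := by
          rw [hμ0, Measure.restrict_apply_univ, Real.volume_Ico]
          norm_num
        have hint : Integrable (fun r => ∫ s, h r s ∂π) μ0 := claimC.integral_prod_right
        calc ∫ r, ∫ s, h r s ∂π ∂μ0
            ≤ ∫ _, ε ∂μ0 := by
              apply integral_mono_ae hint (integrable_const ε)
              rw [hμ0]
              filter_upwards [ae_restrict_mem measurableSet_Ico] with r hr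
              calc ∫ s, h r s ∂π
                  = ∫ s, (u i (Function.update s i (ζr r (s i))) - u i s) ∂π := by
                    apply integral_congr_ae
                    filter_upwards with s
                    exact claimB r hr s
                _ ≤ ε := hyp i (ζr r) (hζmeas r)
          _ = ε := by rw [integral_const, measureReal_def, hone, one_smul]


lemma aux_indicator_approx (n : ℕ) (C : Fin n → Type*)
    [∀ i, TopologicalSpace (C i)] [∀ i, CompactSpace (C i)] [∀ i, T2Space (C i)]
    [∀ i, MeasurableSpace (C i)] [∀ i, BorelSpace (C i)]
    (π : Measure (∀ i, C i)) [IsProbabilityMeasure π] [π.Regular]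
    (i : Fin n) (k : ℕ) (A : Fin k → Set (C i)) (hA : ∀ j, MeasurableSet (A j))
    (hdisj : ∀ j l, j ≠ l → Disjoint (A j) (A l))
    (δ : ℝ) (hδ : 0 < δ) :
    ∃ f : Fin k → C i → ℝ, (∀ j, Continuous (f j)) ∧
      (∀ j x, f j x ∈ Set.Icc (0:ℝ) 1) ∧ (∀ x, ∑ j, f j x ≤ 1) ∧
      ∀ j, ∃ S : Set (C i), MeasurableSet S ∧
        π ((fun s => s i) ⁻¹' S) ≤ ENNReal.ofReal (2*δ) ∧
        ∀ x, |Set.indicator (A j) (fun _ => (1:ℝ)) x - f j x| ≤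
          Set.indicator S (fun _ => (1:ℝ)) x := by
  classical
  set e : (∀ i, C i) → C i := fun s => s i with he
  have hec : Continuous e := continuous_apply i
  have hem : Measurable e := measurable_pi_apply i
  set δ' : ENNReal := ENNReal.ofReal δ with hδ'
  have hδ'0 : δ' ≠ 0 := by
    rw [hδ', ne_eq, ENNReal.ofReal_eq_zero, not_le]
    exact hδ
  set P : Fin k → Set (∀ i, C i) := fun j => e ⁻¹' (A j) with hP
  have hPmeas : ∀ j, MeasurableSet (P j) := fun j => (measurable_pi_apply i) (hA j)
  -- compact inner approximation
  have hK : ∀ j, ∃ K : Set (∀ i, C i), K ⊆ P j ∧ IsCompact K ∧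
      π (P j) ≤ π K + δ' := by
    intro j
    by_cases hsmall : π (P j) ≤ δ'
    · exact ⟨∅, Set.empty_subset _, isCompact_empty, le_trans hsmall le_add_self⟩
    · push_neg at hsmall
      have hreg : π.InnerRegularCompactLTTop := inferInstance
      obtain ⟨K, hKsub, hKc, hKgt⟩ := hreg.innerRegular
        ⟨hPmeas j, measure_ne_top π _⟩ (π (P j) - δ')
        (ENNReal.sub_lt_self (measure_ne_top π _)
          (fun h0 => absurd hsmall (by rw [h0]; exact not_lt_of_ge zero_le)) hδ'0)
      refine ⟨K, hKsub, hKc, le_of_lt ?_⟩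
      exact (ENNReal.sub_lt_iff_lt_right (by rw [hδ']; exact ENNReal.ofReal_ne_top)
        (le_of_lt hsmall)).1 hKgt
  choose K hKsub hKc hKge using hK
  set L : Fin k → Set (C i) := fun j => e '' (K j) with hL
  have hLc : ∀ j, IsCompact (L j) := fun j => (hKc j).image hec
  have hLclosed : ∀ j, IsClosed (L j) := fun j => (hLc j).isClosed
  have hLsub : ∀ j, L j ⊆ A j := by
    intro j y hy
    obtain ⟨s, hs, rfl⟩ := hy
    exact hKsub j hs
  have hKL : ∀ j, K j ⊆ e ⁻¹' (L j) := fun j => Set.subset_preimage_image e (K j)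
  have hALsmall : ∀ j, π (P j \ e ⁻¹' (L j)) ≤ δ' := by
    intro j
    have h1 : π (P j \ e ⁻¹' (L j)) = π (P j) - π (e ⁻¹' (L j)) :=
      measure_diff (Set.preimage_mono (hLsub j))
        ((hem (hLclosed j).measurableSet).nullMeasurableSet)
        (measure_ne_top π _)
    rw [h1]
    calc π (P j) - π (e ⁻¹' (L j)) ≤ (π (K j) + δ') - π (K j) :=
          tsub_le_tsub (hKge j) (measure_mono (hKL j))
      _ = δ' := ENNReal.add_sub_cancel_left (measure_ne_top π _)
  -- outer open approximation via the shrink lemma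
  have hV0 : ∀ j, ∃ V : Set (C i), IsOpen V ∧ L j ⊆ V ∧
      π (e ⁻¹' V \ e ⁻¹' (L j)) ≤ δ' := by
    intro j
    obtain ⟨W, hWsub, hWopen, hWle⟩ :=
      Set.exists_isOpen_le_add (e ⁻¹' (L j)) π hδ'0
    obtain ⟨V, hVopen, hLV, hVW⟩ := aux_shrink e hec (L j) W hWopen hWsub
    refine ⟨V, hVopen, hLV, ?_⟩
    have h1 : π (e ⁻¹' V \ e ⁻¹' (L j)) = π (e ⁻¹' V) - π (e ⁻¹' (L j)) :=
      measure_diff (Set.preimage_mono hLV)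
        ((hem (hLclosed j).measurableSet).nullMeasurableSet)
        (measure_ne_top π _)
    rw [h1]
    rw [tsub_le_iff_left]
    exact le_trans (measure_mono hVW) hWle
  choose V0 hV0open hLV0 hV0small using hV0
  -- pairwise separation of the L j
  have hLdisj : ∀ j l, j ≠ l → Disjoint (L j) (L l) := fun j l hjl =>
    Set.disjoint_of_subset (hLsub j) (hLsub l) (hdisj j l hjl)
  have hpair : ∀ j l : Fin k, ∃ PQ : Set (C i) × Set (C i),
      IsOpen PQ.1 ∧ IsOpen PQ.2 ∧ L j ⊆ PQ.1 ∧ L l ⊆ PQ.2 ∧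
      (j ≠ l → Disjoint PQ.1 PQ.2) := by
    intro j l
    by_cases hjl : j = l
    · exact ⟨(Set.univ, Set.univ), isOpen_univ, isOpen_univ,
        Set.subset_univ _, Set.subset_univ _, fun h => absurd hjl h⟩
    · obtain ⟨Pj, Ql, hPo, hQo, hLP, hLQ, hPQ⟩ :=
        SeparatedNhds.of_isCompact_isCompact (hLc j) (hLc l) (hLdisj j l hjl)
      exact ⟨(Pj, Ql), hPo, hQo, hLP, hLQ, fun _ => hPQ⟩
  choose PQ hPQ1 hPQ2 hPQ3 hPQ4 hPQ5 using hpair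
  set V : Fin k → Set (C i) := fun j =>
    V0 j ∩ ⋂ (l : Fin k), ⋂ (_ : l ≠ j), ((PQ j l).1 ∩ (PQ l j).2) with hV
  have hVopen : ∀ j, IsOpen (V j) := by
    intro j
    apply (hV0open j).inter
    apply isOpen_iInter_of_finite
    intro l
    apply isOpen_iInter_of_finite
    intro _
    exact (hPQ1 j l).inter (hPQ2 l j)
  have hLV : ∀ j, L j ⊆ V j := by
    intro j
    apply Set.subset_inter (hLV0 j)
    apply Set.subset_iInter
    intro l
    apply Set.subset_iInter
    intro _
    exact Set.subset_inter (hPQ3 j l) (hPQ4 l j)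
  have hVdisj : ∀ j l, j ≠ l → Disjoint (V j) (V l) := by
    intro j l hjl
    have h1 : V j ⊆ (PQ j l).1 := by
      intro x hx
      have := hx.2
      rw [Set.mem_iInter] at this
      have := this l
      rw [Set.mem_iInter] at this
      exact (this (Ne.symm hjl)).1
    have h2 : V l ⊆ (PQ j l).2 := by
      intro x hx
      have := hx.2
      rw [Set.mem_iInter] at this
      have := this j
      rw [Set.mem_iInter] at this
      exact (this hjl).2
    exact Set.disjoint_of_subset h1 h2 (hPQ5 j l hjl)
  have hVsmall : ∀ j, π (e ⁻¹' (V j) \ e ⁻¹' (L j)) ≤ δ' := by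
    intro j
    refine le_trans (measure_mono ?_) (hV0small j)
    exact Set.diff_subset_diff_left (Set.preimage_mono Set.inter_subset_left)
  -- Urysohn functions
  have hf : ∀ j, ∃ g : C(C i, ℝ), Set.EqOn g 0 (V j)ᶜ ∧ Set.EqOn g 1 (L j) ∧
      ∀ x, g x ∈ Set.Icc (0:ℝ) 1 := by
    intro j
    apply exists_continuous_zero_one_of_isClosed (hVopen j).isClosed_compl (hLclosed j)
    rw [Set.disjoint_left]
    intro x hx hxL
    exact hx (hLV j hxL)
  choose g hg0 hg1 hgIcc using hf
  refine ⟨fun j => ⇑(g j), fun j => (g j).continuous, fun j x => hgIcc j x, ?_, ?_⟩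
  · -- sum bound
    intro x
    by_cases hx : ∃ j, x ∈ V j
    · obtain ⟨j0, hj0⟩ := hx
      have : ∑ j, g j x = g j0 x := by
        apply Finset.sum_eq_single j0
        · intro l _ hl
          apply hg0 l
          intro hcon
          exact Set.disjoint_left.1 (hVdisj j0 l (Ne.symm hl)) hj0 hcon
        · intro h; exact absurd (Finset.mem_univ j0) h
      rw [this]
      exact (hgIcc j0 x).2
    · push_neg at hx
      have : ∑ j, g j x = 0 := Finset.sum_eq_zero fun l _ => hg0 l (hx l)
      rw [this]; exact zero_le_one
  · -- per-j approximation set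
    intro j
    refine ⟨(A j ∪ V j) \ L j, ?_, ?_, ?_⟩
    · exact ((hA j).union (hVopen j).measurableSet).diff (hLclosed j).measurableSet
    · have hsplit : (fun s => s i) ⁻¹' ((A j ∪ V j) \ L j) ⊆
          (P j \ e ⁻¹' (L j)) ∪ (e ⁻¹' (V j) \ e ⁻¹' (L j)) := by
        intro s hs
        obtain ⟨hmem, hnot⟩ := hs
        rcases hmem with hA' | hV'
        · exact Or.inl ⟨hA', hnot⟩
        · exact Or.inr ⟨hV', hnot⟩
      calc π ((fun s => s i) ⁻¹' ((A j ∪ V j) \ L j))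
          ≤ π ((P j \ e ⁻¹' (L j)) ∪ (e ⁻¹' (V j) \ e ⁻¹' (L j))) := measure_mono hsplit
        _ ≤ π (P j \ e ⁻¹' (L j)) + π (e ⁻¹' (V j) \ e ⁻¹' (L j)) := measure_union_le _ _
        _ ≤ δ' + δ' := add_le_add (hALsmall j) (hVsmall j)
        _ = ENNReal.ofReal (2*δ) := by
            rw [hδ', ← ENNReal.ofReal_add (le_of_lt hδ) (le_of_lt hδ)]
            ring_nf
    · intro x
      dsimp only
      by_cases hxL : x ∈ L j
      · have h1 : Set.indicator (A j) (fun _ => (1:ℝ)) x = 1 :=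
          Set.indicator_of_mem (hLsub j hxL) _
        have h2 : g j x = 1 := hg1 j hxL
        simp [h1, h2, Set.indicator_nonneg]
      · by_cases hxAV : x ∈ A j ∪ V j
        · have hmem : x ∈ (A j ∪ V j) \ L j := ⟨hxAV, hxL⟩
          rw [Set.indicator_of_mem hmem]
          have hind : Set.indicator (A j) (fun _ => (1:ℝ)) x ∈ Set.Icc (0:ℝ) 1 := by
            by_cases hxA : x ∈ A j
            · rw [Set.indicator_of_mem hxA]; exact ⟨zero_le_one, le_refl 1⟩
            · rw [Set.indicator_of_notMem hxA]; exact ⟨le_refl 0, zero_le_one⟩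
          obtain ⟨ha, hb⟩ := hind
          obtain ⟨hc, hd⟩ := hgIcc j x
          rw [abs_le]
          constructor <;> linarith
        · have hxA : x ∉ A j := fun h => hxAV (Or.inl h)
          have hxV : x ∉ V j := fun h => hxAV (Or.inr h)
          have hmem : x ∉ (A j ∪ V j) \ L j := fun h => hxAV h.1
          rw [Set.indicator_of_notMem hmem, Set.indicator_of_notMem hxA,
            hg0 j hxV]
          simp


section BWD
variable {n : ℕ} {C : Fin n → Type*}
    [∀ i, TopologicalSpace (C i)] [∀ i, CompactSpace (C i)] [∀ i, T2Space (C i)]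
    [∀ i, MeasurableSpace (C i)] [∀ i, BorelSpace (C i)]

lemma aux_backward
    (u : Fin n → (∀ i, C i) → ℝ) (hu : ∀ i, Continuous (u i))
    (π : Measure (∀ i, C i)) [IsProbabilityMeasure π] [π.Regular]
    (ε : ℝ)
    (hyp : ∀ i, ∀ k : ℕ, 0 < k → ∀ t : Fin k → C i, ∀ f : Fin k → C i → ℝ,
      (∀ j, Continuous (f j)) →
      (∀ j x, f j x ∈ Set.Icc (0 : ℝ) 1) →
      (∀ x, ∑ j, f j x ≤ 1) →
      ∑ j, ∫ s, f j (s i) * (u i (Function.update s i (t j)) - u i s) ∂π ≤ ε) :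
    ∀ i, ∀ ζ : C i → C i, Measurable ζ →
      ∫ s, (u i (Function.update s i (ζ (s i))) - u i s) ∂π ≤ ε := by
  intro i ζ hζ
  classical
  have hCne : Nonempty (∀ i, C i) := by
    by_contra hne
    rw [not_nonempty_iff] at hne
    have := measure_univ (μ := π)
    simp [Set.univ_eq_empty_iff.2 hne] at this
  have hCine : Nonempty (C i) := hCne.elim fun s => ⟨s i⟩
  set Φ : C i → (∀ i, C i) → ℝ := fun y s => u i (Function.update s i y) with hΦdef
  have hΦ : Continuous fun p : C i × (∀ i, C i) => Φ p.1 p.2 :=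
    (hu i).comp ((continuous_update i).comp (continuous_snd.prodMk continuous_fst))
  obtain ⟨B, hB⟩ := isCompact_univ.exists_bound_of_continuousOn (hu i).continuousOn
  set M : ℝ := 2 * B with hMdef
  have hM0 : 0 ≤ M := by
    obtain ⟨s0⟩ := hCne
    have := hB s0 (mem_univ s0)
    have h0 : (0:ℝ) ≤ ‖u i s0‖ := norm_nonneg _
    rw [hMdef]; linarith
  have hgM : ∀ (y : C i) (s : ∀ i, C i), |Φ y s - u i s| ≤ M := by
    intro y s
    have h1 := hB _ (mem_univ (Function.update s i y))
    have h2 := hB _ (mem_univ s)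
    simp only [Real.norm_eq_abs] at h1 h2
    rw [hMdef]
    calc |Φ y s - u i s| ≤ |Φ y s| + |u i s| := abs_sub _ _
      _ ≤ 2 * B := by rw [hΦdef]; dsimp only; linarith
  -- measurability of the deviation map
  have hupdmeas : Measurable fun s : ∀ i, C i => Function.update s i (ζ (s i)) := by
    apply measurable_pi_lambda
    intro l
    by_cases hl : l = i
    · subst hl
      simp only [Function.update_self]
      exact hζ.comp (measurable_pi_apply l)
    · simp only [Function.update_of_ne hl]
      exact measurable_pi_apply l
  have hLHSmeas : Measurable fun s => u i (Function.update s i (ζ (s i))) - u i s :=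
    ((aux_cont_meas (hu i)).comp hupdmeas).sub (aux_cont_meas (hu i))
  have hLHSint : Integrable (fun s => u i (Function.update s i (ζ (s i))) - u i s) π := by
    refine ⟨hLHSmeas.aestronglyMeasurable, ?_⟩
    apply MeasureTheory.HasFiniteIntegral.of_bounded (C := M)
    filter_upwards with s
    rw [Real.norm_eq_abs]
    exact hgM (ζ (s i)) s
  apply le_of_forall_pos_le_add
  intro δ hδ
  -- uniform cover
  obtain ⟨k, hk, t, U, hUopen, hUcover, hUapprox⟩ := aux_cover Φ hΦ (half_pos hδ)
  -- disjointified cover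
  set W : Fin k → Set (C i) := fun j => U j \ ⋃ (l : Fin k), ⋃ (_ : l < j), U l with hW
  have hWsubU : ∀ j, W j ⊆ U j := fun j => Set.diff_subset
  have hWmeas : ∀ j, MeasurableSet (W j) :=
    fun j => (hUopen j).measurableSet.diff
      (MeasurableSet.iUnion fun l => MeasurableSet.iUnion fun _ => (hUopen l).measurableSet)
  have hWnotU : ∀ j l, l < j → ∀ x ∈ W j, x ∉ U l := by
    intro j l hlj x hx hxl
    exact hx.2 (Set.mem_iUnion.2 ⟨l, Set.mem_iUnion.2 ⟨hlj, hxl⟩⟩)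
  have hWdisj : ∀ j l, j ≠ l → Disjoint (W j) (W l) := by
    intro j l hjl
    rcases lt_or_gt_of_ne hjl with h | h
    · rw [Set.disjoint_left]
      intro x hxj hxl
      exact hWnotU l j h x hxl (hWsubU j hxj)
    · rw [Set.disjoint_left]
      intro x hxj hxl
      exact hWnotU j l h x hxj (hWsubU l hxl)
  have hWcover : ∀ x : C i, ∃ j, x ∈ W j := by
    intro x
    have hUx : ∃ j, x ∈ U j := Set.mem_iUnion.1 (hUcover (mem_univ x))
    set Sx : Finset (Fin k) := Finset.univ.filter (fun j => x ∈ U j) with hSx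
    have hSne : Sx.Nonempty := by
      obtain ⟨j, hj⟩ := hUx
      exact ⟨j, by simp [hSx, hj]⟩
    refine ⟨Sx.min' hSne, ?_, ?_⟩
    · have := Sx.min'_mem hSne
      simp only [hSx, Finset.mem_filter] at this
      exact this.2
    · intro hcon
      rw [Set.mem_iUnion] at hcon
      obtain ⟨l, hl⟩ := hcon
      rw [Set.mem_iUnion] at hl
      obtain ⟨hlj, hxl⟩ := hl
      have : Sx.min' hSne ≤ l := Finset.min'_le _ _ (by simp [hSx, hxl])
      exact absurd (lt_of_le_of_lt this hlj) (lt_irrefl _)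
  -- measurable partition pulled back by ζ
  set A : Fin k → Set (C i) := fun j => ζ ⁻¹' (W j) with hA
  have hAmeas : ∀ j, MeasurableSet (A j) := fun j => hζ (hWmeas j)
  have hAdisj : ∀ j l, j ≠ l → Disjoint (A j) (A l) :=
    fun j l hjl => Disjoint.preimage ζ (hWdisj j l hjl)
  have hAcover : ∀ x, ∃ j, x ∈ A j := fun x => hWcover (ζ x)
  -- gain functions
  set g : Fin k → (∀ i, C i) → ℝ := fun j s => Φ (t j) s - u i s with hg
  have hgc : ∀ j, Continuous (g j) := by
    intro j
    apply Continuous.sub _ (hu i)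
    exact (hu i).comp ((continuous_update i).comp (continuous_id.prodMk continuous_const))
  have hgMj : ∀ j s, |g j s| ≤ M := fun j s => hgM (t j) s
  set ind : Fin k → (∀ i, C i) → ℝ :=
    fun j s => Set.indicator (A j) (fun _ => (1:ℝ)) (s i) * g j s with hind
  have hindmeas : ∀ j, Measurable (ind j) := by
    intro j
    exact ((measurable_const.indicator (hAmeas j)).comp (measurable_pi_apply i)).mul
      (aux_cont_meas (hgc j))
  have hindbd : ∀ j s, |ind j s| ≤ M := by
    intro j s
    rw [hind]
    dsimp only
    rw [abs_mul]
    by_cases hx : s i ∈ A j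
    · rw [Set.indicator_of_mem hx]
      simpa using hgMj j s
    · rw [Set.indicator_of_notMem hx]
      simpa using hM0
  have hindint : ∀ j, Integrable (ind j) π := by
    intro j
    refine ⟨(hindmeas j).aestronglyMeasurable, ?_⟩
    apply MeasureTheory.HasFiniteIntegral.of_bounded (C := M)
    filter_upwards with s
    rw [Real.norm_eq_abs]; exact hindbd j s
  -- pointwise bound
  have hpt : ∀ s, u i (Function.update s i (ζ (s i))) - u i s ≤ (∑ j, ind j s) + δ/2 := by
    intro s
    obtain ⟨j0, hj0⟩ := hAcover (s i)
    have hsum : ∑ j, ind j s = g j0 s := by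
      rw [hind]
      dsimp only
      rw [Finset.sum_eq_single j0]
      · rw [Set.indicator_of_mem hj0, one_mul]
      · intro l _ hl
        rw [Set.indicator_of_notMem, zero_mul]
        exact fun hcon => Set.disjoint_left.1 (hAdisj j0 l (Ne.symm hl)) hj0 hcon
      · intro h; exact absurd (Finset.mem_univ j0) h
    have hUj0 : ζ (s i) ∈ U j0 := hWsubU j0 hj0
    have happ := hUapprox j0 (ζ (s i)) s hUj0
    have habs := abs_le.1 happ
    rw [hsum]
    have : u i (Function.update s i (ζ (s i))) = Φ (ζ (s i)) s := rfl
    rw [this, hg]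
    dsimp only
    linarith [habs.1, habs.2]
  -- integrate
  have hRHSint : Integrable (fun s => (∑ j, ind j s) + δ/2) π :=
    (integrable_finset_sum _ fun j _ => hindint j).add (integrable_const _)
  have h1 : ∫ s, (u i (Function.update s i (ζ (s i))) - u i s) ∂π ≤
      ∫ s, ((∑ j, ind j s) + δ/2) ∂π :=
    integral_mono hLHSint hRHSint hpt
  have h2 : ∫ s, ((∑ j, ind j s) + δ/2) ∂π = (∑ j, ∫ s, ind j s ∂π) + δ/2 := by
    rw [integral_add (integrable_finset_sum _ fun j _ => hindint j) (integrable_const _),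
      integral_finset_sum _ fun j _ => hindint j, integral_const]
    simp [measure_univ]
  -- key claim
  have hkey : ∑ j, ∫ s, ind j s ∂π ≤ ε := by
    apply le_of_forall_pos_le_add
    intro η hη
    have hkpos : (0:ℝ) < k := by exact_mod_cast hk
    have h2M1 : (0:ℝ) < 2*M + 1 := by linarith
    set δℝ : ℝ := η / (k * (2*M + 1)) with hδℝdef
    have hδℝ : 0 < δℝ := by
      rw [hδℝdef]
      positivity
    obtain ⟨f, hfc, hfIcc, hfsum, hfS⟩ :=
      aux_indicator_approx n C π i k A hAmeas hAdisj δℝ hδℝ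
    have happly := hyp i k hk t f hfc hfIcc hfsum
    -- per-j error bound
    have herr : ∀ j, ∫ s, ind j s ∂π ≤
        (∫ s, f j (s i) * g j s ∂π) + M * (2*δℝ) := by
      intro j
      obtain ⟨S, hSmeas, hSsmall, hSapprox⟩ := hfS j
      have hfmeas : Measurable (f j) := (hfc j).measurable
      have hfgint : Integrable (fun s => f j (s i) * g j s) π := by
        refine ⟨((hfmeas.comp (measurable_pi_apply i)).mul
          (aux_cont_meas (hgc j))).aestronglyMeasurable, ?_⟩
        apply MeasureTheory.HasFiniteIntegral.of_bounded (C := M)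
        filter_upwards with s
        rw [Real.norm_eq_abs, abs_mul]
        obtain ⟨ha, hb⟩ := hfIcc j (s i)
        calc |f j (s i)| * |g j s| ≤ 1 * |g j s| := by
              apply mul_le_mul_of_nonneg_right _ (abs_nonneg _)
              rw [abs_le]; constructor <;> linarith
          _ ≤ M := by rw [one_mul]; exact hgMj j s
      have hindicint : Integrable
          (fun s : ∀ i, C i => Set.indicator S (fun _ => M) (s i)) π := by
        refine ⟨((measurable_const.indicator hSmeas).comp
          (measurable_pi_apply i)).aestronglyMeasurable, ?_⟩
        apply MeasureTheory.HasFiniteIntegral.of_bounded (C := M)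
        filter_upwards with s
        rw [Real.norm_eq_abs]
        by_cases hx : s i ∈ S
        · rw [Set.indicator_of_mem hx]; rw [abs_of_nonneg hM0]
        · rw [Set.indicator_of_notMem hx]; rw [abs_of_nonneg (le_refl 0)]; exact hM0
      have hptdiff : ∀ s, ind j s - f j (s i) * g j s ≤
          Set.indicator S (fun _ => M) (s i) := by
        intro s
        have h3 := hSapprox (s i)
        have h4 := hgMj j s
        rw [hind]
        dsimp only
        have heq : Set.indicator (A j) (fun _ => (1:ℝ)) (s i) * g j s
            - f j (s i) * g j s
            = (Set.indicator (A j) (fun _ => (1:ℝ)) (s i) - f j (s i)) * g j s := by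
          ring
        rw [heq]
        by_cases hx : s i ∈ S
        · rw [Set.indicator_of_mem hx]
          calc (Set.indicator (A j) (fun _ => (1:ℝ)) (s i) - f j (s i)) * g j s
              ≤ |(Set.indicator (A j) (fun _ => (1:ℝ)) (s i) - f j (s i)) * g j s| :=
                le_abs_self _
            _ = |Set.indicator (A j) (fun _ => (1:ℝ)) (s i) - f j (s i)| * |g j s| :=
                abs_mul _ _
            _ ≤ 1 * M := by
                apply mul_le_mul _ h4 (abs_nonneg _) zero_le_one
                calc |Set.indicator (A j) (fun _ => (1:ℝ)) (s i) - f j (s i)|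
                    ≤ Set.indicator S (fun _ => (1:ℝ)) (s i) := h3
                  _ ≤ 1 := by
                      by_cases h : s i ∈ S
                      · rw [Set.indicator_of_mem h]
                      · rw [Set.indicator_of_notMem h]; exact zero_le_one
            _ = M := one_mul M
        · rw [Set.indicator_of_notMem hx]
          rw [Set.indicator_of_notMem hx] at h3
          have h5 : |Set.indicator (A j) (fun _ => (1:ℝ)) (s i) - f j (s i)| = 0 :=
            le_antisymm h3 (abs_nonneg _)
          rw [abs_eq_zero] at h5
          rw [h5, zero_mul]
      have hdiffint : Integrable (fun s => ind j s - f j (s i) * g j s) π :=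
        (hindint j).sub hfgint
      have h6 : ∫ s, (ind j s - f j (s i) * g j s) ∂π ≤
          ∫ s, Set.indicator S (fun _ => M) (s i) ∂π :=
        integral_mono hdiffint hindicint hptdiff
      have h7 : ∫ s, Set.indicator S (fun _ => M) (s i) ∂π ≤ M * (2*δℝ) := by
        have heq : (fun s : ∀ i, C i => Set.indicator S (fun _ => M) (s i)) =
            Set.indicator ((fun s : ∀ i, C i => s i) ⁻¹' S) (fun _ => M) := by
          funext s
          show Set.indicator S (fun _ => M) (s i) =
            Set.indicator ((fun s : ∀ i, C i => s i) ⁻¹' S) (fun _ => M) s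
          by_cases hx : s i ∈ S
          · rw [Set.indicator_of_mem hx,
              Set.indicator_of_mem (show s ∈ (fun s : ∀ i, C i => s i) ⁻¹' S from hx)]
          · rw [Set.indicator_of_notMem hx,
              Set.indicator_of_notMem (show s ∉ (fun s : ∀ i, C i => s i) ⁻¹' S from hx)]
        rw [heq, integral_indicator_const _ ((measurable_pi_apply i) hSmeas)]
        rw [smul_eq_mul, mul_comm]
        apply mul_le_mul_of_nonneg_left _ hM0
        have h8 : (π ((fun s : ∀ i, C i => s i) ⁻¹' S)).toReal ≤
            (ENNReal.ofReal (2*δℝ)).toReal :=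
          ENNReal.toReal_mono ENNReal.ofReal_ne_top hSsmall
        rwa [ENNReal.toReal_ofReal (by positivity)] at h8
      have h9 : ∫ s, (ind j s - f j (s i) * g j s) ∂π =
          ∫ s, ind j s ∂π - ∫ s, f j (s i) * g j s ∂π :=
        integral_sub (hindint j) hfgint
      linarith [h6, h7, h9.symm.le, h9.le]
    calc ∑ j, ∫ s, ind j s ∂π
        ≤ ∑ j, ((∫ s, f j (s i) * g j s ∂π) + M * (2*δℝ)) :=
          Finset.sum_le_sum fun j _ => herr j
      _ = (∑ j, ∫ s, f j (s i) * g j s ∂π) + k * (M * (2*δℝ)) := by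
          rw [Finset.sum_add_distrib, Finset.sum_const, Finset.card_univ]
          simp [nsmul_eq_mul]
      _ ≤ ε + k * (M * (2*δℝ)) := by
          apply add_le_add_left
          exact happly
      _ ≤ ε + η := by
          apply add_le_add_right
          rw [hδℝdef]
          rw [div_eq_mul_inv]
          have heq : (k:ℝ) * (M * (2 * (η * ((k:ℝ) * (2*M + 1))⁻¹))) =
              η * ((2*M) / (2*M+1)) := by
            field_simp
          rw [heq]
          calc η * ((2*M) / (2*M+1)) ≤ η * 1 := by
                apply mul_le_mul_of_nonneg_left _ (le_of_lt hη)
                rw [div_le_one h2M1]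
                linarith
            _ = η := mul_one η
  linarith [h1, h2.le, h2.symm.le, hkey]
end BWD


theorem stmt_8 (n : ℕ) (C : Fin n → Type*)
    [∀ i, TopologicalSpace (C i)] [∀ i, CompactSpace (C i)] [∀ i, T2Space (C i)]
    [∀ i, MeasurableSpace (C i)] [∀ i, BorelSpace (C i)]
    (u : Fin n → (∀ i, C i) → ℝ) (hu : ∀ i, Continuous (u i))
    (π : Measure (∀ i, C i)) [IsProbabilityMeasure π] [π.Regular]
    (ε : ℝ) :
    (∀ i, ∀ ζ : C i → C i, Measurable ζ →
      ∫ s, (u i (Function.update s i (ζ (s i))) - u i s) ∂π ≤ ε) ↔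
    (∀ i, ∀ k : ℕ, 0 < k → ∀ t : Fin k → C i, ∀ f : Fin k → C i → ℝ,
      (∀ j, Continuous (f j)) →
      (∀ j x, f j x ∈ Set.Icc (0 : ℝ) 1) →
      (∀ x, ∑ j, f j x ≤ 1) →
      ∑ j, ∫ s, f j (s i) * (u i (Function.update s i (t j)) - u i s) ∂π ≤ ε) := by
  constructor
  · exact aux_forward n C u hu π ε
  · exact aux_backward u hu π ε
end

section
/- In a polynomial game (strategy sets C_i = [−1,1], polynomial utilities), a probability measure π is a correlated equilibrium if and only if for every player i, every t_i ∈ [−1,1], and every polynomial p, ∫ p(s_i)^2 [u_i(t_i, s_{−i}) − u_i(s)] dπ(s) ≤ 0. -/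
open MeasureTheory Set
open scoped ENNReal NNReal

noncomputable section

lemma integrable_of_bdd {α : Type*} [MeasurableSpace α] {μ : Measure α} [IsFiniteMeasure μ]
    {f : α → ℝ} (hf : AEStronglyMeasurable f μ) {C : ℝ} (h : ∀ a, |f a| ≤ C) :
    Integrable f μ :=
  ⟨hf, HasFiniteIntegral.of_bounded (C := C)
    (Filter.Eventually.of_forall (by simpa [Real.norm_eq_abs] using h))⟩

lemma cont_le (μ ν : Measure (Icc (-1:ℝ) 1)) [IsFiniteMeasure μ] [IsFiniteMeasure ν]
    (h : ∀ p : Polynomial ℝ, ∫ x, (p.eval (x:ℝ))^2 ∂μ ≤ ∫ x, (p.eval (x:ℝ))^2 ∂ν)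
    (f : C(Icc (-1:ℝ) 1, ℝ)) (hf : ∀ x, 0 ≤ f x) :
    ∫ x, f x ∂μ ≤ ∫ x, f x ∂ν := by
  set g : C(Icc (-1:ℝ) 1, ℝ) := ⟨fun x => Real.sqrt (f x), Real.continuous_sqrt.comp f.continuous⟩
    with hg
  have hgsq : ∀ x, (g x)^2 = f x := fun x => Real.sq_sqrt (hf x)
  set M : ℝ := (μ univ).toReal + (ν univ).toReal with hM
  have hM0 : 0 ≤ M := by positivity
  refine le_of_forall_pos_le_add (fun ε hε => ?_)
  -- choose δ
  set δ : ℝ := min 1 (ε / ((2*‖g‖+1) * (M+1))) with hδdef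
  have hδ0 : 0 < δ := by
    apply lt_min one_pos
    positivity
  have hδ1 : δ ≤ 1 := min_le_left _ _
  -- get polynomial near g
  have mem : g ∈ closure ((polynomialFunctions (Icc (-1:ℝ) 1)) : Set C(Icc (-1:ℝ) 1, ℝ)) := by
    have := polynomialFunctions_closure_eq_top (-1:ℝ) 1
    rw [← Subalgebra.topologicalClosure_coe, this]
    trivial
  obtain ⟨q, hq_mem, hq_dist⟩ := Metric.mem_closure_iff.mp mem δ hδ0
  rw [polynomialFunctions_coe] at hq_mem
  obtain ⟨p, rfl⟩ := hq_mem
  -- pointwise bound |f x - p x ^ 2| ≤ δ * (2‖g‖+1)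
  have key : ∀ x, |f x - (p.eval (x:ℝ))^2| ≤ δ * (2*‖g‖+1) := by
    intro x
    have h1 : |g x - p.eval (x:ℝ)| ≤ δ := by
      have := hq_dist
      rw [ContinuousMap.dist_lt_iff hδ0] at this
      have h2 := this x
      rw [Real.dist_eq] at h2
      exact le_of_lt (by simpa using h2)
    have h2 : |g x| ≤ ‖g‖ := by
      have := g.norm_coe_le_norm x
      simpa [Real.norm_eq_abs] using this
    have h3 : |p.eval (x:ℝ)| ≤ ‖g‖ + δ := by
      have : |p.eval (x:ℝ)| - |g x| ≤ |g x - p.eval (x:ℝ)| := by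
        rw [abs_sub_comm]
        exact abs_sub_abs_le_abs_sub _ _
      linarith
    have : f x - (p.eval (x:ℝ))^2 = (g x - p.eval (x:ℝ)) * (g x + p.eval (x:ℝ)) := by
      rw [← hgsq x]; ring
    rw [this, abs_mul]
    have h4 : |g x + p.eval (x:ℝ)| ≤ 2*‖g‖ + δ := by
      calc |g x + p.eval (x:ℝ)| ≤ |g x| + |p.eval (x:ℝ)| := abs_add_le _ _
        _ ≤ 2*‖g‖ + δ := by linarith
    calc |g x - p.eval (x:ℝ)| * |g x + p.eval (x:ℝ)| ≤ δ * (2*‖g‖ + δ) := by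
          apply mul_le_mul h1 h4 (abs_nonneg _) (le_of_lt hδ0)
      _ ≤ δ * (2*‖g‖+1) := by nlinarith [norm_nonneg g]
  -- integrability of continuous functions
  have cint : ∀ (κ : Measure (Icc (-1:ℝ) 1)) [IsFiniteMeasure κ] (F : C(Icc (-1:ℝ) 1, ℝ)),
      Integrable (fun x => F x) κ := by
    intro κ _ F
    exact integrable_of_bdd (F.continuous.measurable.aestronglyMeasurable)
      (C := ‖F‖) (fun x => by simpa [Real.norm_eq_abs] using F.norm_coe_le_norm x)
  set B : ℝ := 2*‖g‖+1 with hB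
  have hB0 : 0 < B := by positivity
  set psq : C(Icc (-1:ℝ) 1, ℝ) := ⟨fun x => (p.eval (x:ℝ))^2,
    ((p.continuous).comp continuous_subtype_val).pow 2⟩ with hpsq
  have hcoeμ : ∫ x, psq x ∂μ = ∫ x, (p.eval (x:ℝ))^2 ∂μ := rfl
  have hcoeν : ∫ x, psq x ∂ν = ∫ x, (p.eval (x:ℝ))^2 ∂ν := rfl
  have step1 : ∫ x, f x ∂μ ≤ ∫ x, (p.eval (x:ℝ))^2 ∂μ + δ * B * (μ univ).toReal := by
    have h0 : ∫ x, f x ∂μ ≤ ∫ x, (psq x + δ * B) ∂μ := by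
      apply integral_mono (cint μ f) ((cint μ psq).add (integrable_const _))
      intro x
      have h1 := (abs_le.mp (key x)).2
      show f x ≤ (p.eval (x:ℝ))^2 + δ * B
      linarith
    rw [integral_add (cint μ psq) (integrable_const _), integral_const, smul_eq_mul,
      mul_comm, hcoeμ] at h0
    simp only [Measure.real] at h0
    linarith
  have step2 : ∫ x, (p.eval (x:ℝ))^2 ∂ν ≤ ∫ x, f x ∂ν + δ * B * (ν univ).toReal := by
    have h0 : ∫ x, psq x ∂ν ≤ ∫ x, (f x + δ * B) ∂ν := by
      apply integral_mono (cint ν psq) ((cint ν f).add (integrable_const _))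
      intro x
      have h1 := (abs_le.mp (key x)).1
      show (p.eval (x:ℝ))^2 ≤ f x + δ * B
      linarith
    rw [integral_add (cint ν f) (integrable_const _), integral_const, smul_eq_mul,
      mul_comm, hcoeν] at h0
    simp only [Measure.real] at h0
    linarith
  have hδε : δ * B * M ≤ ε := by
    have h1 : δ ≤ ε / (B * (M+1)) := min_le_right _ _
    have h2 : δ * (B * (M+1)) ≤ ε := by
      rw [← le_div_iff₀ (by positivity)]
      exact h1
    nlinarith
  have := h p
  have hμT : (μ univ).toReal + (ν univ).toReal = M := rfl
  calc ∫ x, f x ∂μ ≤ ∫ x, (p.eval (x:ℝ))^2 ∂μ + δ * B * (μ univ).toReal := step1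
    _ ≤ ∫ x, (p.eval (x:ℝ))^2 ∂ν + δ * B * (μ univ).toReal := by linarith
    _ ≤ ∫ x, f x ∂ν + δ * B * (ν univ).toReal + δ * B * (μ univ).toReal := by linarith
    _ ≤ ∫ x, f x ∂ν + ε := by
        have hsum : δ*B*(ν univ).toReal + δ*B*(μ univ).toReal = δ*B*M := by rw [hM]; ring
        linarith

lemma measure_le_of_sq (μ ν : Measure (Icc (-1:ℝ) 1)) [IsFiniteMeasure μ] [IsFiniteMeasure ν]
    (h : ∀ p : Polynomial ℝ, ∫ x, (p.eval (x:ℝ))^2 ∂μ ≤ ∫ x, (p.eval (x:ℝ))^2 ∂ν) : μ ≤ ν := by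
  have hclosed : ∀ F : Set (Icc (-1:ℝ) 1), IsClosed F → μ F ≤ ν F := by
    intro F hF
    have hμ := HasOuterApproxClosed.tendsto_lintegral_apprSeq hF μ
    have hν := HasOuterApproxClosed.tendsto_lintegral_apprSeq hF ν
    refine le_of_tendsto_of_tendsto' hμ hν (fun n => ?_)
    have hcont : Continuous fun x : Icc (-1:ℝ) 1 => ((hF.apprSeq n x : ℝ)) :=
      NNReal.continuous_coe.comp (hF.apprSeq n).continuous
    have hintμ : Integrable (fun x => ((hF.apprSeq n x : ℝ))) μ :=
      integrable_of_bdd hcont.measurable.aestronglyMeasurable (C := 1)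
        (fun x => by
          have := HasOuterApproxClosed.apprSeq_apply_le_one hF n x
          rw [abs_of_nonneg (by positivity)]
          exact_mod_cast this)
    have hintν : Integrable (fun x => ((hF.apprSeq n x : ℝ))) ν :=
      integrable_of_bdd hcont.measurable.aestronglyMeasurable (C := 1)
        (fun x => by
          have := HasOuterApproxClosed.apprSeq_apply_le_one hF n x
          rw [abs_of_nonneg (by positivity)]
          exact_mod_cast this)
    rw [lintegral_coe_eq_integral _ hintμ, lintegral_coe_eq_integral _ hintν]
    exact ENNReal.ofReal_le_ofReal
      (cont_le μ ν h ⟨fun x => (hF.apprSeq n x : ℝ), hcont⟩ (fun x => (hF.apprSeq n x).2))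
  rw [Measure.le_iff]
  intro A hA
  refine ENNReal.le_of_forall_pos_le_add (fun ε hε hνA => ?_)
  have hε' : ((ε : ℝ≥0∞)) ≠ 0 := by exact_mod_cast hε.ne'
  obtain ⟨F, hFA, hFc, hlt⟩ := hA.exists_isClosed_lt_add (μ := μ) (measure_ne_top μ A) hε' 
  calc μ A ≤ μ F + ε := hlt.le
    _ ≤ ν F + ε := add_le_add (hclosed F hFc) le_rfl
    _ ≤ ν A + ε := add_le_add (measure_mono hFA) le_rfl

def pushPart {n : ℕ} (π : Measure (Fin n → Icc (-1:ℝ) 1)) (i : Fin n)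
    (h : (Fin n → Icc (-1:ℝ) 1) → ℝ) : Measure (Icc (-1:ℝ) 1) :=
  (π.withDensity (fun s => ENNReal.ofReal (h s))).map (fun s => s i)

lemma pushPart_finite {n : ℕ} (π : Measure (Fin n → Icc (-1:ℝ) 1)) [IsFiniteMeasure π]
    (i : Fin n) (h : (Fin n → Icc (-1:ℝ) 1) → ℝ) {C : ℝ} (hC : ∀ s, h s ≤ C) :
    IsFiniteMeasure (pushPart π i h) := by
  constructor
  rw [pushPart, Measure.map_apply (measurable_pi_apply i) MeasurableSet.univ,
    Set.preimage_univ, withDensity_apply _ MeasurableSet.univ, Measure.restrict_univ]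
  calc ∫⁻ s, ENNReal.ofReal (h s) ∂π ≤ ∫⁻ _, ENNReal.ofReal C ∂π :=
        lintegral_mono (fun s => ENNReal.ofReal_le_ofReal (hC s))
    _ = ENNReal.ofReal C * π univ := lintegral_const _
    _ < ⊤ := ENNReal.mul_lt_top ENNReal.ofReal_lt_top (measure_lt_top π univ)

lemma max_bdd_aux {a C y Cf : ℝ} (ha : |a| ≤ C) (hy : |y| ≤ Cf) (hCf : 0 ≤ Cf) :
    |(max a 0) * y| ≤ C * Cf := by
  rw [abs_mul]
  apply mul_le_mul _ hy (abs_nonneg _) ((abs_nonneg a).trans ha)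
  rw [abs_of_nonneg (le_max_right _ _)]
  exact le_trans (max_le (le_abs_self _) (abs_nonneg _)) ha

lemma pushPart_integral {n : ℕ} (π : Measure (Fin n → Icc (-1:ℝ) 1)) [IsFiniteMeasure π]
    (i : Fin n) (h : (Fin n → Icc (-1:ℝ) 1) → ℝ) (hmeas : Measurable h)
    {C : ℝ} (hC : ∀ s, |h s| ≤ C)
    (f : Icc (-1:ℝ) 1 → ℝ) (hf : Measurable f) {Cf : ℝ} (hCf : ∀ x, |f x| ≤ Cf)
    (hCf0 : 0 ≤ Cf) :
    ∫ x, f x ∂(pushPart π i h) - ∫ x, f x ∂(pushPart π i (fun s => - h s))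
      = ∫ s, f (s i) * h s ∂π := by
  have hmeas' : Measurable (fun s : Fin n → Icc (-1:ℝ) 1 => - h s) := hmeas.neg
  have e1 : ∀ (g : (Fin n → Icc (-1:ℝ) 1) → ℝ), Measurable g →
      ∫ x, f x ∂(pushPart π i g) = ∫ s, (max (g s) 0) * f (s i) ∂π := by
    intro g hg
    rw [pushPart, integral_map (measurable_pi_apply i).aemeasurable hf.aestronglyMeasurable]
    have hd : (fun s => ENNReal.ofReal (g s)) = fun s => (((g s).toNNReal : ℝ≥0) : ℝ≥0∞) := rfl
    rw [hd, integral_withDensity_eq_integral_smul hg.real_toNNReal (fun s => f (s i))]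
    apply integral_congr_ae
    filter_upwards with s
    simp only [NNReal.smul_def, Real.coe_toNNReal', smul_eq_mul]
  rw [e1 h hmeas, e1 _ hmeas']
  have int1 : Integrable (fun s => (max (h s) 0) * f (s i)) π := by
    apply integrable_of_bdd (C := C * Cf)
    · exact ((hmeas.max measurable_const).mul
        (hf.comp (measurable_pi_apply i))).aestronglyMeasurable
    · exact fun s => max_bdd_aux (hC s) (hCf (s i)) hCf0
  have int2 : Integrable (fun s => (max (- h s) 0) * f (s i)) π := by
    apply integrable_of_bdd (C := C * Cf)
    · exact ((hmeas.neg.max measurable_const).mul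
        (hf.comp (measurable_pi_apply i))).aestronglyMeasurable
    · exact fun s => max_bdd_aux (by rw [abs_neg]; exact hC s) (hCf (s i)) hCf0
  rw [← integral_sub int1 int2]
  apply integral_congr_ae
  filter_upwards with s
  rcases le_total 0 (h s) with hs | hs
  · rw [max_eq_left hs, max_eq_right (by linarith)]; ring
  · rw [max_eq_right hs, max_eq_left (by linarith)]; ring

set_option maxHeartbeats 2000000 in
theorem main_aux {n : ℕ} (π : Measure (Fin n → Icc (-1:ℝ) 1)) [IsProbabilityMeasure π]
    (w : (Fin n → Icc (-1:ℝ) 1) → ℝ) (hw : Continuous w) (i : Fin n) :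
    (∀ ζ : Icc (-1:ℝ) 1 → Icc (-1:ℝ) 1, Measurable ζ →
      ∫ s, (w (Function.update s i (ζ (s i))) - w s) ∂π ≤ 0) ↔
    (∀ tᵢ : Icc (-1:ℝ) 1, ∀ p : Polynomial ℝ,
      ∫ s, (p.eval ((s i : ℝ))) ^ 2 * (w (Function.update s i tᵢ) - w s) ∂π ≤ 0) := by
  classical
  set D : Icc (-1:ℝ) 1 → (Fin n → Icc (-1:ℝ) 1) → ℝ :=
    fun t s => w (Function.update s i t) - w s with hDdef
  -- boundedness
  set wb := BoundedContinuousFunction.mkOfCompact ⟨w, hw⟩ with hwb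
  have hwbd : ∀ s, |w s| ≤ ‖wb‖ := by
    intro s
    have := wb.norm_coe_le_norm s
    simpa [Real.norm_eq_abs, hwb] using this
  set C : ℝ := 2 * ‖wb‖ with hCdef
  have hD : ∀ t s, |D t s| ≤ C := by
    intro t s
    have h1 := hwbd (Function.update s i t)
    have h2 := hwbd s
    rw [hDdef]
    calc |w (Function.update s i t) - w s| ≤ |w (Function.update s i t)| + |w s| := abs_sub _ _
      _ ≤ C := by rw [hCdef]; linarith
  -- measurability of update maps
  have hupd : ∀ (ζ : Icc (-1:ℝ) 1 → Icc (-1:ℝ) 1), Measurable ζ →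
      Measurable (fun s : Fin n → Icc (-1:ℝ) 1 => Function.update s i (ζ (s i))) := by
    intro ζ hζ
    apply measurable_pi_lambda
    intro j
    by_cases hj : j = i
    · subst hj
      simp only [Function.update_self]
      exact hζ.comp (measurable_pi_apply _)
    · simp only [Function.update_of_ne hj]
      exact measurable_pi_apply j
  have hupdc : ∀ (t : Icc (-1:ℝ) 1),
      Measurable (fun s : Fin n → Icc (-1:ℝ) 1 => Function.update s i t) := by
    intro t
    exact hupd (fun _ => t) measurable_const
  have hDmeas : ∀ t, Measurable (D t) := by
    intro t
    exact (hw.measurable.comp (hupdc t)).sub hw.measurable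
  have hDint : ∀ t, Integrable (D t) π := fun t =>
    integrable_of_bdd (hDmeas t).aestronglyMeasurable (hD t)
  -- finite measure instances
  have finP : ∀ t, IsFiniteMeasure (pushPart π i (D t)) := fun t =>
    pushPart_finite π i (D t) (fun s => (abs_le.mp (hD t s)).2)
  have finN : ∀ t, IsFiniteMeasure (pushPart π i (fun s => - D t s)) := fun t =>
    pushPart_finite π i _ (C := C) (fun s => by
      have := (abs_le.mp (hD t s)).1; linarith)
  -- the middle condition
  have hbiff : ∀ t : Icc (-1:ℝ) 1,
      (∀ A : Set (Icc (-1:ℝ) 1), MeasurableSet A →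
        ∫ s, A.indicator 1 (s i) * D t s ∂π ≤ 0)
      ↔ pushPart π i (D t) ≤ pushPart π i (fun s => - D t s) := by
    intro t
    haveI := finP t
    haveI := finN t
    have trans : ∀ A : Set (Icc (-1:ℝ) 1), MeasurableSet A →
        ∫ s, A.indicator 1 (s i) * D t s ∂π
          = ((pushPart π i (D t)) A).toReal
            - ((pushPart π i (fun s => - D t s)) A).toReal := by
      intro A hA
      have := pushPart_integral π i (D t) (hDmeas t) (hD t)
        (A.indicator 1) (measurable_one.indicator hA) (Cf := 1)
        (fun x => by by_cases h : x ∈ A <;> simp [h]) one_pos.le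
      rw [← this, integral_indicator_one hA, integral_indicator_one hA]
      rfl
    constructor
    · intro hb
      rw [Measure.le_iff]
      intro A hA
      have h1 := trans A hA
      have h2 := hb A hA
      rw [h1] at h2
      exact (ENNReal.toReal_le_toReal (measure_ne_top _ _) (measure_ne_top _ _)).mp
        (by linarith)
    · intro hle A hA
      rw [trans A hA, sub_nonpos]
      exact (ENNReal.toReal_le_toReal (measure_ne_top _ _) (measure_ne_top _ _)).mpr
        (Measure.le_iff'.mp hle A)
  constructor
  · -- forward direction
    intro hlhs t p
    -- step 1: indicator tests
    have hb : ∀ A : Set (Icc (-1:ℝ) 1), MeasurableSet A →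
        ∫ s, A.indicator 1 (s i) * D t s ∂π ≤ 0 := by
      intro A hA
      have hζ : Measurable (fun x : Icc (-1:ℝ) 1 => if x ∈ A then t else x) :=
        Measurable.ite hA measurable_const measurable_id
      have := hlhs _ hζ
      have heq : ∀ s : Fin n → Icc (-1:ℝ) 1,
          w (Function.update s i (if s i ∈ A then t else s i)) - w s
            = A.indicator 1 (s i) * D t s := by
        intro s
        by_cases h : s i ∈ A
        · simp [h, hDdef]
        · simp [h, Function.update_eq_self]
      rw [show (fun s : Fin n → Icc (-1:ℝ) 1 =>
          w (Function.update s i ((fun x => if x ∈ A then t else x) (s i))) - w s)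
          = fun s => A.indicator 1 (s i) * D t s from funext heq] at this
      exact this
    have hle := (hbiff t).mp hb
    haveI := finP t
    haveI := finN t
    -- step 2: apply with f = p^2
    set f : Icc (-1:ℝ) 1 → ℝ := fun x => (p.eval (x:ℝ))^2 with hfdef
    have hfc : Continuous f := ((p.continuous).comp continuous_subtype_val).pow 2
    set fb := BoundedContinuousFunction.mkOfCompact ⟨f, hfc⟩ with hfb
    have hfbd : ∀ x, |f x| ≤ ‖fb‖ := by
      intro x
      have := fb.norm_coe_le_norm x
      simpa [Real.norm_eq_abs, hfb] using this
    have hint : Integrable f (pushPart π i (fun s => - D t s)) :=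
      integrable_of_bdd hfc.measurable.aestronglyMeasurable hfbd
    have hmono : ∫ x, f x ∂(pushPart π i (D t))
        ≤ ∫ x, f x ∂(pushPart π i (fun s => - D t s)) :=
      integral_mono_measure hle
        (Filter.Eventually.of_forall (fun x => sq_nonneg _)) hint
    have htr := pushPart_integral π i (D t) (hDmeas t) (hD t)
      f hfc.measurable hfbd ((abs_nonneg (f ⟨0, by norm_num⟩)).trans (hfbd _))
    calc ∫ s, (p.eval ((s i : ℝ)))^2 * (w (Function.update s i t) - w s) ∂π
        = ∫ s, f (s i) * D t s ∂π := rfl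
      _ = ∫ x, f x ∂(pushPart π i (D t))
            - ∫ x, f x ∂(pushPart π i (fun s => - D t s)) := htr.symm
      _ ≤ 0 := by linarith
  · -- backward direction
    intro hrhs
    -- measure inequality from polynomial tests
    have hle : ∀ t, pushPart π i (D t) ≤ pushPart π i (fun s => - D t s) := by
      intro t
      haveI := finP t
      haveI := finN t
      apply measure_le_of_sq
      intro p
      set f : Icc (-1:ℝ) 1 → ℝ := fun x => (p.eval (x:ℝ))^2 with hfdef
      have hfc : Continuous f := ((p.continuous).comp continuous_subtype_val).pow 2
      set fb := BoundedContinuousFunction.mkOfCompact ⟨f, hfc⟩ with hfb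
      have hfbd : ∀ x, |f x| ≤ ‖fb‖ := by
        intro x
        have := fb.norm_coe_le_norm x
        simpa [Real.norm_eq_abs, hfb] using this
      have htr := pushPart_integral π i (D t) (hDmeas t) (hD t)
        f hfc.measurable hfbd ((abs_nonneg (f ⟨0, by norm_num⟩)).trans (hfbd _))
      have := hrhs t p
      have hgoal : ∫ s, f (s i) * D t s ∂π ≤ 0 := this
      linarith [htr]
    have hb : ∀ t : Icc (-1:ℝ) 1, ∀ A : Set (Icc (-1:ℝ) 1), MeasurableSet A →
        ∫ s, A.indicator 1 (s i) * D t s ∂π ≤ 0 := by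
      intro t
      exact (hbiff t).mpr (hle t)
    -- simple functions
    have key : ∀ (φ : SimpleFunc (Icc (-1:ℝ) 1) (Icc (-1:ℝ) 1)),
        ∫ s, (w (Function.update s i (φ (s i))) - w s) ∂π ≤ 0 := by
      intro φ
      have exp : ∀ s : Fin n → Icc (-1:ℝ) 1,
          w (Function.update s i (φ (s i))) - w s
            = ∑ t ∈ φ.range, (⇑φ ⁻¹' {t}).indicator 1 (s i) * D t s := by
        intro s
        rw [Finset.sum_eq_single (φ (s i))]
        · simp [hDdef]
        · intro b _ hne
          rw [Set.indicator_of_notMem (by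
            simp only [Set.mem_preimage, Set.mem_singleton_iff]
            exact fun h => hne h.symm), zero_mul]
        · intro h
          exact absurd (φ.mem_range_self (s i)) h
      rw [show (fun s : Fin n → Icc (-1:ℝ) 1 =>
          w (Function.update s i (φ (s i))) - w s)
          = fun s => ∑ t ∈ φ.range, (⇑φ ⁻¹' {t}).indicator 1 (s i) * D t s from funext exp]
      rw [integral_finset_sum]
      · apply Finset.sum_nonpos
        intro t _
        exact hb t _ (φ.measurableSet_fiber t)
      · intro t _
        apply integrable_of_bdd (C := C)
        · exact ((measurable_one.indicator (φ.measurableSet_fiber t)).comp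
            (measurable_pi_apply i)).mul (hDmeas t) |>.aestronglyMeasurable
        · intro s
          rw [abs_mul]
          by_cases h : s i ∈ ⇑φ ⁻¹' {t}
          · simp only [Set.indicator_of_mem h]
            calc |(1:ℝ)| * |D t s| = |D t s| := by rw [abs_one, one_mul]
              _ ≤ C := hD t s
          · simp only [Set.indicator_of_notMem h, abs_zero, zero_mul]
            exact le_trans (abs_nonneg (D t s)) (hD t s)
    -- approximation of measurable ζ
    intro ζ hζ
    haveI : TopologicalSpace.SeparableSpace (Set.univ : Set (Icc (-1:ℝ) 1)) :=
      inferInstance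
    set y0 : Icc (-1:ℝ) 1 := ⟨0, by norm_num⟩ with hy0
    set φn : ℕ → SimpleFunc (Icc (-1:ℝ) 1) (Icc (-1:ℝ) 1) :=
      fun m => SimpleFunc.approxOn ζ hζ Set.univ y0 (Set.mem_univ y0) m with hφn
    have htend : ∀ x, Filter.Tendsto (fun m => φn m x) Filter.atTop (nhds (ζ x)) := by
      intro x
      apply SimpleFunc.tendsto_approxOn hζ (Set.mem_univ y0)
      simp
    have hwupd : ∀ s : Fin n → Icc (-1:ℝ) 1,
        Continuous fun t : Icc (-1:ℝ) 1 => Function.update s i t := by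
      intro s
      apply continuous_pi
      intro j
      by_cases hj : j = i
      · subst hj
        simp only [Function.update_self]
        exact continuous_id
      · simp only [Function.update_of_ne hj]
        exact continuous_const
    have hdom := tendsto_integral_of_dominated_convergence (μ := π)
      (F := fun m s => w (Function.update s i (φn m (s i))) - w s)
      (f := fun s => w (Function.update s i (ζ (s i))) - w s)
      (bound := fun _ => C)
      (fun m => ((hw.measurable.comp (hupd (φn m) (φn m).measurable)).sub
        hw.measurable).aestronglyMeasurable)
      (integrable_const C)
      (fun m => Filter.Eventually.of_forall (fun s => by
        have := hD (φn m (s i)) s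
        simpa [Real.norm_eq_abs, hDdef] using this))
      (Filter.Eventually.of_forall (fun s => by
        have hc : Continuous fun t : Icc (-1:ℝ) 1 => w (Function.update s i t) - w s :=
          (hw.comp (hwupd s)).sub continuous_const
        have := (hc.continuousAt (x := ζ (s i))).tendsto.comp
          ((htend (s i)).comp Filter.tendsto_id)
        exact this))
    refine le_of_tendsto hdom ?_
    exact Filter.Eventually.of_forall (fun m => key (φn m))

theorem stmt_9 (n : ℕ) (U : Fin n → MvPolynomial (Fin n) ℝ)
    (π : Measure (Fin n → Set.Icc (-1 : ℝ) 1)) [IsProbabilityMeasure π]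
    (u : Fin n → (Fin n → Set.Icc (-1 : ℝ) 1) → ℝ)
    (hu : ∀ i s, u i s = MvPolynomial.eval (fun j => (s j : ℝ)) (U i)) :
    (∀ i, ∀ ζ : Set.Icc (-1 : ℝ) 1 → Set.Icc (-1 : ℝ) 1, Measurable ζ →
      ∫ s, (u i (Function.update s i (ζ (s i))) - u i s) ∂π ≤ 0) ↔
    (∀ i, ∀ tᵢ : Set.Icc (-1 : ℝ) 1, ∀ p : Polynomial ℝ,
      ∫ s, (p.eval (s i : ℝ)) ^ 2 *
        (u i (Function.update s i tᵢ) - u i s) ∂π ≤ 0) := by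
  have hcont : ∀ i, Continuous (u i) := by
    intro i
    have h : u i = fun s => MvPolynomial.eval (fun j => ((s j : ℝ))) (U i) := funext (hu i)
    rw [h]
    exact (MvPolynomial.continuous_eval (U i)).comp
      (continuous_pi (fun j => continuous_subtype_val.comp (continuous_apply j)))
  constructor
  · intro h i t p
    exact (main_aux π (u i) (hcont i) i).mp (h i) t p
  · intro h i ζ hζ
    exact (main_aux π (u i) (hcont i) i).mpr (h i) ζ hζ

end
end

section
/- In a continuous game, a probability measure π is a correlated equilibrium if and only if for every player i, every t_i ∈ C_i, and every Borel measurable set B_i ⊆ C_i, ∫_{B_i × C_{−i}} [u_i(t_i, s_{−i}) − u_i(s)] dπ(s) ≤ 0. -/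
open MeasureTheory

/-- Every continuous real function on a finite product of compact Hausdorff Borel
spaces is measurable with respect to the product σ-algebra, by Stone–Weierstrass. -/
lemma measurable_of_continuous_pi_compact {n : ℕ} {C : Fin n → Type*}
    [∀ i, TopologicalSpace (C i)] [∀ i, CompactSpace (C i)] [∀ i, T2Space (C i)]
    [∀ i, MeasurableSpace (C i)] [∀ i, BorelSpace (C i)]
    (f : C((∀ j, C j), ℝ)) : Measurable (f : (∀ j, C j) → ℝ) := by
  classical
  set gens : Set C((∀ j, C j), ℝ) :=
    {g | ∃ (j : Fin n) (h : C(C j, ℝ)), g = h.comp ⟨fun s => s j, continuous_apply j⟩}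
    with hgens
  set A : Subalgebra ℝ C((∀ j, C j), ℝ) := Algebra.adjoin ℝ gens with hA
  have hsep : A.SeparatesPoints := by
    intro x y hxy
    obtain ⟨j, hj⟩ := Function.ne_iff.mp hxy
    obtain ⟨h, h0, h1, -⟩ := exists_continuous_zero_one_of_isClosed
      (isClosed_singleton (x := x j)) (isClosed_singleton (x := y j))
      (Set.disjoint_singleton.mpr hj)
    have hg : (h.comp ⟨fun s => s j, continuous_apply j⟩) ∈ A :=
      Algebra.subset_adjoin ⟨j, h, rfl⟩
    refine ⟨_, ⟨_, hg, rfl⟩, ?_⟩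
    simp only [ContinuousMap.comp_apply, ContinuousMap.coe_mk]
    rw [h0 rfl, h1 rfl]
    norm_num
  have hmeasA : ∀ g ∈ A, Measurable (g : (∀ j, C j) → ℝ) := by
    intro g hg
    induction hg using Algebra.adjoin_induction with
    | mem g hgm =>
      obtain ⟨j, h, rfl⟩ := hgm
      exact h.continuous.measurable.comp (measurable_pi_apply j)
    | algebraMap r =>
      have : (⇑((algebraMap ℝ C((j : Fin n) → C j, ℝ)) r)) = fun _ => r := rfl
      rw [this]; exact measurable_const
    | add p q _ _ hp hq => simpa using hp.add hq
    | mul p q _ _ hp hq => simpa using hp.mul hq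
  have happrox : ∀ k : ℕ, ∃ g : C((∀ j, C j), ℝ), g ∈ A ∧ ‖g - f‖ < 1 / (k + 1) := by
    intro k
    obtain ⟨g, hg⟩ := ContinuousMap.exists_mem_subalgebra_near_continuousMap_of_separatesPoints
      A hsep f (1 / (k + 1)) (by positivity)
    exact ⟨g, g.2, hg⟩
  choose gs hgsA hgs using happrox
  refine measurable_of_tendsto_metrizable' Filter.atTop
    (fun k => hmeasA (gs k) (hgsA k)) ?_
  rw [tendsto_pi_nhds]
  intro x
  rw [tendsto_iff_dist_tendsto_zero]
  refine squeeze_zero (fun k => dist_nonneg) (fun k => ?_)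
    tendsto_one_div_add_atTop_nhds_zero_nat
  have h1 : dist (gs k x) (f x) = ‖(gs k - f) x‖ := by
    rw [Real.dist_eq]; simp [Real.norm_eq_abs]
  rw [h1]
  exact le_trans ((gs k - f).norm_coe_le_norm x) (hgs k).le

open MeasureTheory

theorem stmt_10 (n : ℕ) (C : Fin n → Type*)
    [∀ i, TopologicalSpace (C i)] [∀ i, CompactSpace (C i)] [∀ i, T2Space (C i)]
    [∀ i, MeasurableSpace (C i)] [∀ i, BorelSpace (C i)]
    (u : Fin n → (∀ i, C i) → ℝ) (hu : ∀ i, Continuous (u i))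
    (π : Measure (∀ i, C i)) [IsProbabilityMeasure π] [π.Regular] :
    (∀ i, ∀ ζ : C i → C i, Measurable ζ →
      ∫ s, (u i (Function.update s i (ζ (s i))) - u i s) ∂π ≤ 0) ↔
    (∀ i, ∀ tᵢ : C i, ∀ B : Set (C i), MeasurableSet B →
      ∫ s in {s | s i ∈ B}, (u i (Function.update s i tᵢ) - u i s) ∂π ≤ 0) := by
  classical
  have hum : ∀ i, Measurable (u i) := fun i =>
    measurable_of_continuous_pi_compact ⟨u i, hu i⟩
  have hupd : ∀ (i : Fin n) (φ : C i → C i), Measurable φ →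
      Measurable fun s : ∀ j, C j => u i (Function.update s i (φ (s i))) := by
    intro i φ hφ
    exact (hum i).comp
      (measurable_update'.comp (measurable_id.prodMk (hφ.comp (measurable_pi_apply i))))
  constructor
  · -- forward direction
    intro h i tᵢ B hB
    have hζ : Measurable (B.piecewise (fun _ => tᵢ) id) :=
      Measurable.piecewise hB measurable_const measurable_id
    have hmS : MeasurableSet {s : ∀ j, C j | s i ∈ B} := measurable_pi_apply i hB
    have key := h i _ hζ
    have heq : (fun s : ∀ j, C j =>
        u i (Function.update s i (B.piecewise (fun _ => tᵢ) id (s i))) - u i s)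
        = Set.indicator {s : ∀ j, C j | s i ∈ B}
            (fun s => u i (Function.update s i tᵢ) - u i s) := by
      funext s
      by_cases hs : s i ∈ B
      · simp [Set.piecewise, hs, Set.indicator]
      · simp [Set.piecewise, hs, Set.indicator, Function.update_eq_self]
    rw [heq, integral_indicator hmS] at key
    exact key
  · -- backward direction
    intro h i ζ hζ
    -- continuous map machinery
    set F : C((C i) × (∀ j, C j), ℝ) :=
      ⟨fun p => u i (Function.update p.2 i p.1),
        (hu i).comp ((continuous_snd).update i continuous_fst)⟩ with hF
    set g : C(C i, C(∀ j, C j, ℝ)) := F.curry with hg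
    -- integrability
    set M : ℝ := ‖(⟨u i, hu i⟩ : C((∀ j, C j), ℝ))‖ with hMdef
    have hM : ∀ x, |u i x| ≤ M := fun x =>
      (⟨u i, hu i⟩ : C((∀ j, C j), ℝ)).norm_coe_le_norm x
    have hInt : ∀ (φ : C i → C i), Measurable φ →
        Integrable (fun s : ∀ j, C j =>
          u i (Function.update s i (φ (s i))) - u i s) π := by
      intro φ hφ
      have hm : Measurable fun s : ∀ j, C j =>
          u i (Function.update s i (φ (s i))) - u i s :=
        (hupd i φ hφ).sub (hum i)
      refine ⟨hm.aestronglyMeasurable, ?_⟩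
      apply MeasureTheory.HasFiniteIntegral.of_bounded (C := M + M)
      filter_upwards with s
      have h1 := hM (Function.update s i (φ (s i)))
      have h2 := hM s
      simp only [Real.norm_eq_abs]
      calc |u i (Function.update s i (φ (s i))) - u i s|
          ≤ |u i (Function.update s i (φ (s i)))| + |u i s| := abs_sub _ _
        _ ≤ M + M := add_le_add h1 h2
    -- it suffices to bound the integral by every ε > 0
    have main : ∀ ε : ℝ, 0 < ε →
        ∫ s, (u i (Function.update s i (ζ (s i))) - u i s) ∂π ≤ ε := by
      intro ε hε
      -- open cover of C i by ε-closeness neighborhoods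
      set Uo : C i → Set (C i) := fun t' => g ⁻¹' Metric.ball (g t') ε with hUo
      have hUopen : ∀ t', IsOpen (Uo t') := fun t' =>
        Metric.isOpen_ball.preimage g.continuous
      have hUmem : ∀ t', t' ∈ Uo t' := fun t' => by
        simp [hUo, Metric.mem_ball, hε]
      obtain ⟨T, hT⟩ := isCompact_univ.elim_finite_subcover Uo hUopen
        (fun t _ => Set.mem_iUnion.2 ⟨t, hUmem t⟩)
      -- key inductive claim
      have key : ∀ (T' : Finset (C i)), ∀ S : Set (C i), MeasurableSet S →
          (∀ x ∈ S, ∃ t' ∈ T', ζ x ∈ Uo t') →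
          ∫ s in {s : ∀ j, C j | s i ∈ S},
            (u i (Function.update s i (ζ (s i))) - u i s) ∂π
            ≤ ε * (π {s : ∀ j, C j | s i ∈ S}).toReal := by
        intro T'
        induction T' using Finset.induction with
        | empty =>
          intro S hS hcov
          have hSempty : S = ∅ := by
            ext x; simp only [Set.mem_empty_iff_false, iff_false]
            intro hx
            obtain ⟨t', ht', -⟩ := hcov x hx
            exact absurd ht' (Finset.notMem_empty t')
          subst hSempty
          simp
        | @insert t' T' _ ih =>
          intro S hS hcov
          set S₁ : Set (C i) := S ∩ ζ ⁻¹' (Uo t') with hS₁def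
          set S₂ : Set (C i) := S \ ζ ⁻¹' (Uo t') with hS₂def
          have hζU : MeasurableSet (ζ ⁻¹' (Uo t')) := hζ (hUopen t').measurableSet
          have hmS₁ : MeasurableSet S₁ := hS.inter hζU
          have hmS₂ : MeasurableSet S₂ := hS.diff hζU
          have hmP : ∀ A : Set (C i), MeasurableSet A →
              MeasurableSet {s : ∀ j, C j | s i ∈ A} :=
            fun A hA => measurable_pi_apply i hA
          have hsplit : {s : ∀ j, C j | s i ∈ S}
              = {s | s i ∈ S₁} ∪ {s | s i ∈ S₂} := by
            ext s
            simp only [hS₁def, hS₂def, Set.mem_setOf_eq, Set.mem_union,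
              Set.mem_inter_iff, Set.mem_diff, Set.mem_preimage]
            tauto
          have hdisj : Disjoint {s : ∀ j, C j | s i ∈ S₁} {s | s i ∈ S₂} := by
            rw [Set.disjoint_left]
            intro s hs1 hs2
            exact hs2.2 hs1.2
          have hI := hInt ζ hζ
          have hintg : ∫ s in {s : ∀ j, C j | s i ∈ S},
              (u i (Function.update s i (ζ (s i))) - u i s) ∂π
              = (∫ s in {s : ∀ j, C j | s i ∈ S₁},
                  (u i (Function.update s i (ζ (s i))) - u i s) ∂π)
                + ∫ s in {s : ∀ j, C j | s i ∈ S₂},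
                  (u i (Function.update s i (ζ (s i))) - u i s) ∂π := by
            rw [hsplit]
            exact setIntegral_union hdisj (hmP S₂ hmS₂) hI.integrableOn hI.integrableOn
          -- bound on S₁ piece
          have hb1 : ∫ s in {s : ∀ j, C j | s i ∈ S₁},
              (u i (Function.update s i (ζ (s i))) - u i s) ∂π
              ≤ ε * (π {s : ∀ j, C j | s i ∈ S₁}).toReal := by
            have hIc : Integrable (fun s : ∀ j, C j =>
                u i (Function.update s i t') - u i s) π := by
              simpa using hInt (fun _ => t') measurable_const
            have hmono : ∀ s ∈ {s : ∀ j, C j | s i ∈ S₁},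
                u i (Function.update s i (ζ (s i))) - u i s
                  ≤ (u i (Function.update s i t') - u i s) + ε := by
              intro s hs
              have hsU : ζ (s i) ∈ Uo t' := hs.2
              have hd : dist (g (ζ (s i))) (g t') < ε := by
                simpa [hUo, Metric.mem_ball] using hsU
              have happ : dist (g (ζ (s i)) s) (g t' s) ≤ dist (g (ζ (s i))) (g t') :=
                ContinuousMap.dist_apply_le_dist s
              have habs : |u i (Function.update s i (ζ (s i)))
                  - u i (Function.update s i t')| ≤ dist (g (ζ (s i))) (g t') := by
                simpa [hg, hF, Real.dist_eq, ContinuousMap.curry_apply] using happ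
              have := (abs_le.mp (habs.trans hd.le)).2
              linarith
            calc ∫ s in {s : ∀ j, C j | s i ∈ S₁},
                  (u i (Function.update s i (ζ (s i))) - u i s) ∂π
                ≤ ∫ s in {s : ∀ j, C j | s i ∈ S₁},
                  ((u i (Function.update s i t') - u i s) + ε) ∂π := by
                  apply setIntegral_mono_on hI.integrableOn
                    (hIc.integrableOn.add (integrable_const ε).integrableOn)
                    (hmP S₁ hmS₁) hmono
              _ = (∫ s in {s : ∀ j, C j | s i ∈ S₁},
                    (u i (Function.update s i t') - u i s) ∂π)
                  + ε * (π {s : ∀ j, C j | s i ∈ S₁}).toReal := by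
                  rw [integral_add hIc.integrableOn (integrable_const ε).integrableOn,
                    setIntegral_const, smul_eq_mul, mul_comm, measureReal_def]
              _ ≤ 0 + ε * (π {s : ∀ j, C j | s i ∈ S₁}).toReal := by
                  gcongr
                  exact h i t' S₁ hmS₁
              _ = ε * (π {s : ∀ j, C j | s i ∈ S₁}).toReal := by ring
          -- bound on S₂ piece by induction hypothesis
          have hb2 := ih S₂ hmS₂ (by
            intro x hx
            obtain ⟨t'', ht'', hxt⟩ := hcov x hx.1
            rcases Finset.mem_insert.mp ht'' with rfl | hmem
            · exact absurd hxt hx.2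
            · exact ⟨t'', hmem, hxt⟩)
          have hmeas_sum : (π {s : ∀ j, C j | s i ∈ S₁}).toReal
              + (π {s : ∀ j, C j | s i ∈ S₂}).toReal
              = (π {s : ∀ j, C j | s i ∈ S}).toReal := by
            rw [hsplit, measure_union hdisj (hmP S₂ hmS₂)]
            rw [ENNReal.toReal_add (measure_ne_top π _) (measure_ne_top π _)]
          rw [hintg]
          calc _ ≤ ε * (π {s : ∀ j, C j | s i ∈ S₁}).toReal
                + ε * (π {s : ∀ j, C j | s i ∈ S₂}).toReal := add_le_add hb1 hb2
            _ = ε * (π {s : ∀ j, C j | s i ∈ S}).toReal := by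
                rw [← hmeas_sum]; ring
      -- apply with S = univ
      have happly := key T Set.univ MeasurableSet.univ (by
        intro x _
        have := hT (Set.mem_univ (ζ x))
        simpa using this)
      simpa [measure_univ] using happly
    -- conclude
    by_contra hlt
    push_neg at hlt
    obtain ⟨ε, hε1, hε2⟩ := exists_between hlt
    exact absurd (main ε hε1) (not_le.mpr hε2)
end

section
/- A finite sequence of real numbers (μ^0, …, μ^k) arises as the moments μ^i = ∫ x^i dμ(x) of some finite positive Borel measure μ on [−1,1] if and only if ∑_{i=0}^k p_i μ^i ≥ 0 for every polynomial p(x) = ∑_{i=0}^k p_i x^i of degree at most k that is nonnegative on [−1,1]. -/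
open MeasureTheory

lemma stmt19_compact_hull {n : ℕ} {s : Set (Fin n → ℝ)} (hs : IsCompact s)
    (hne : s.Nonempty) : IsCompact (convexHull ℝ s) := by
  classical
  obtain ⟨s₀, hs₀⟩ := hne
  set N := n + 1 with hN
  have hgcont : Continuous (fun p : ((Fin N → ℝ) × (Fin N → (Fin n → ℝ))) =>
      ∑ j : Fin N, p.1 j • p.2 j) := by
    apply continuous_finset_sum
    intro j _
    exact ((continuous_apply j).comp continuous_fst).smul
      ((continuous_apply j).comp continuous_snd)
  have hK : IsCompact ((stdSimplex ℝ (Fin N)) ×ˢ (Set.univ.pi fun _ : Fin N => s)) :=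
    IsCompact.prod (isCompact_stdSimplex (𝕜 := ℝ) (ι := Fin N)) (isCompact_univ_pi fun _ => hs)
  have heq : convexHull ℝ s =
      (fun p : ((Fin N → ℝ) × (Fin N → (Fin n → ℝ))) => ∑ j : Fin N, p.1 j • p.2 j) ''
        ((stdSimplex ℝ (Fin N)) ×ˢ (Set.univ.pi fun _ : Fin N => s)) := by
    apply Set.Subset.antisymm
    · intro x hx
      obtain ⟨ι, hι, z, w, hzs, hai, hw0, hw1, hwz⟩ :=
        eq_pos_convex_span_of_mem_convexHull hx
      letI := hι
      haveI : Nonempty ι := by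
        by_contra h
        rw [not_nonempty_iff] at h
        simp [Finset.univ_eq_empty] at hw1
      have hcard : Fintype.card ι ≤ N := by
        have h1 : Fintype.card ι = Module.finrank ℝ (vectorSpan ℝ (Set.range z)) + 1 :=
          (hai.finrank_vectorSpan_add_one).symm
        have h2 : Module.finrank ℝ (vectorSpan ℝ (Set.range z)) ≤
            Module.finrank ℝ (Fin n → ℝ) := Submodule.finrank_le _
        rw [Module.finrank_fin_fun] at h2
        omega
      obtain ⟨f⟩ : Nonempty (ι ↪ Fin N) :=
        Function.Embedding.nonempty_of_card_le (by simpa using hcard)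
      let w' : Fin N → ℝ := Function.extend f w 0
      let z' : Fin N → (Fin n → ℝ) := Function.extend f z (fun _ => s₀)
      have hw'f : ∀ i, w' (f i) = w i := fun i => f.injective.extend_apply _ _ _
      have hz'f : ∀ i, z' (f i) = z i := fun i => f.injective.extend_apply _ _ _
      have hoff : ∀ j : Fin N, (¬ ∃ i, f i = j) → w' j = 0 := by
        intro j hj
        show Function.extend f w 0 j = 0
        rw [Function.extend_apply' _ _ _ hj]
        rfl
      have hrange : ∀ j : Fin N, j ∉ Finset.univ.map f → w' j = 0 := by
        intro j hj
        exact hoff j fun ⟨i, hi⟩ => hj (Finset.mem_map.2 ⟨i, Finset.mem_univ i, hi⟩)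
      have hwsum : ∑ j : Fin N, w' j = 1 := by
        calc ∑ j : Fin N, w' j = ∑ j ∈ Finset.univ.map f, w' j :=
              (Finset.sum_subset (Finset.subset_univ _) (fun j _ => hrange j)).symm
          _ = ∑ i, w' (f i) := Finset.sum_map _ f w'
          _ = ∑ i, w i := Finset.sum_congr rfl (fun i _ => hw'f i)
          _ = 1 := hw1
      have hwzsum : ∑ j : Fin N, w' j • z' j = x := by
        calc ∑ j : Fin N, w' j • z' j = ∑ j ∈ Finset.univ.map f, w' j • z' j :=
              (Finset.sum_subset (Finset.subset_univ _)
                (fun j _ hj => by rw [hrange j hj, zero_smul])).symm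
          _ = ∑ i, w' (f i) • z' (f i) := Finset.sum_map _ f (fun j => w' j • z' j)
          _ = ∑ i, w i • z i := Finset.sum_congr rfl (fun i _ => by rw [hw'f, hz'f])
          _ = x := hwz
      refine ⟨⟨w', z'⟩, ⟨⟨fun j => ?_, hwsum⟩, fun j _ => ?_⟩, hwzsum⟩
      · show 0 ≤ w' j
        by_cases hj : ∃ i, f i = j
        · obtain ⟨i, rfl⟩ := hj
          rw [hw'f]
          exact (hw0 i).le
        · rw [hoff j hj]
      · show z' j ∈ s
        by_cases hj : ∃ i, f i = j
        · obtain ⟨i, rfl⟩ := hj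
          rw [hz'f]
          exact hzs (Set.mem_range_self i)
        · show Function.extend f z (fun _ => s₀) j ∈ s
          rw [Function.extend_apply' _ _ _ hj]
          exact hs₀
    · rintro y ⟨⟨w, z⟩, ⟨hw, hz⟩, rfl⟩
      exact (convex_convexHull ℝ s).sum_mem (fun j _ => hw.1 j) hw.2
        (fun j _ => subset_convexHull ℝ s (hz j (Set.mem_univ j)))
  rw [heq]
  exact hK.image hgcont


lemma stmt19_cone_mem {k : ℕ} (r : ℝ) (hr : 0 ≤ r) (w : Fin (k + 1) → ℝ)
    (hw : w ∈ convexHull ℝ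
      ((fun x : ℝ => fun i : Fin (k + 1) => x ^ (i : ℕ)) '' Set.Icc (-1 : ℝ) 1)) :
    ∃ μ : Measure ℝ, IsFiniteMeasure μ ∧ μ (Set.Icc (-1 : ℝ) 1)ᶜ = 0 ∧
      ∀ i : Fin (k + 1), r * w i = ∫ x, x ^ (i : ℕ) ∂μ := by
  classical
  obtain ⟨ι, hι, z, c, hzs, _, hc0, hc1, hcz⟩ := eq_pos_convex_span_of_mem_convexHull hw
  letI := hι
  have hex : ∀ j : ι, ∃ t ∈ Set.Icc (-1 : ℝ) 1,
      (fun i : Fin (k + 1) => t ^ (i : ℕ)) = z j := fun j => hzs (Set.mem_range_self j)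
  choose t ht hzt using hex
  refine ⟨∑ j : ι, ENNReal.ofReal (r * c j) • Measure.dirac (t j), ?_, ?_, ?_⟩
  · refine ⟨?_⟩
    rw [Measure.finset_sum_apply]
    refine ENNReal.sum_lt_top.2 fun j _ => ?_
    rw [Measure.smul_apply, smul_eq_mul]
    exact ENNReal.mul_lt_top ENNReal.ofReal_lt_top (measure_lt_top _ _)
  · rw [Measure.finset_sum_apply]
    refine Finset.sum_eq_zero fun j _ => ?_
    rw [Measure.smul_apply, Measure.dirac_apply' _ measurableSet_Icc.compl,
      Set.indicator_of_notMem (by simpa using ht j), smul_zero]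
  · intro i
    have hint : ∀ j : ι, Integrable (fun x : ℝ => x ^ (i : ℕ))
        (ENNReal.ofReal (r * c j) • Measure.dirac (t j)) := by
      intro j
      refine Integrable.smul_measure ?_ ENNReal.ofReal_ne_top
      refine ⟨(measurable_id.pow_const _).aestronglyMeasurable, ?_⟩
      rw [HasFiniteIntegral, lintegral_dirac]
      exact ENNReal.coe_lt_top
    rw [integral_finset_sum_measure fun j _ => hint j]
    have : ∀ j : ι, ∫ x, x ^ (i : ℕ) ∂(ENNReal.ofReal (r * c j) • Measure.dirac (t j)) =
        (r * c j) * (t j) ^ (i : ℕ) := by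
      intro j
      rw [integral_smul_measure, integral_dirac, ENNReal.toReal_ofReal
        (mul_nonneg hr (hc0 j).le), smul_eq_mul]
    rw [Finset.sum_congr rfl fun j _ => this j]
    have hwi : w i = ∑ j : ι, c j * (t j) ^ (i : ℕ) := by
      rw [← hcz, Finset.sum_apply]
      refine Finset.sum_congr rfl fun j _ => ?_
      rw [Pi.smul_apply, smul_eq_mul, ← hzt j]
    rw [hwi, Finset.mul_sum]
    exact Finset.sum_congr rfl fun j _ => by ring


theorem stmt_19 (k : ℕ) (μmom : Fin (k + 1) → ℝ) :
    (∃ μ : Measure ℝ, IsFiniteMeasure μ ∧ μ (Set.Icc (-1 : ℝ) 1)ᶜ = 0 ∧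
      ∀ i : Fin (k + 1), μmom i = ∫ x, x ^ (i : ℕ) ∂μ) ↔
    (∀ p : Polynomial ℝ, p.degree ≤ k →
      (∀ x ∈ Set.Icc (-1 : ℝ) 1, 0 ≤ p.eval x) →
      0 ≤ ∑ i : Fin (k + 1), p.coeff i * μmom i) := by
  classical
  constructor
  · rintro ⟨μ, hfin, hnull, hmom⟩ p hdeg hpos
    have hae : ∀ᵐ x ∂μ, x ∈ Set.Icc (-1 : ℝ) 1 := by
      rw [ae_iff]
      exact hnull
    have hbase : ∀ i : Fin (k + 1), Integrable (fun x : ℝ => x ^ (i : ℕ)) μ := by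
      intro i
      refine Integrable.mono' (integrable_const 1)
        (measurable_id.pow_const _).aestronglyMeasurable ?_
      refine hae.mono fun x hx => ?_
      rw [Real.norm_eq_abs, abs_pow]
      exact pow_le_one₀ (abs_nonneg x) (abs_le.2 ⟨hx.1, hx.2⟩)
    have hnatdeg : p.natDegree < k + 1 :=
      Nat.lt_succ_of_le (Polynomial.natDegree_le_iff_degree_le.2 hdeg)
    calc (0 : ℝ) ≤ ∫ x, p.eval x ∂μ :=
          integral_nonneg_of_ae (hae.mono fun x hx => hpos x hx)
      _ = ∫ x, ∑ i : Fin (k + 1), p.coeff i * x ^ (i : ℕ) ∂μ := by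
          refine integral_congr_ae (Filter.Eventually.of_forall fun x => ?_)
          show p.eval x = ∑ i : Fin (k + 1), p.coeff i * x ^ (i : ℕ)
          rw [Polynomial.eval_eq_sum_range' hnatdeg, Finset.sum_range]
      _ = ∑ i : Fin (k + 1), ∫ x, p.coeff i * x ^ (i : ℕ) ∂μ :=
          integral_finset_sum _ fun i _ => (hbase i).const_mul _
      _ = ∑ i : Fin (k + 1), p.coeff i * μmom i := by
          refine Finset.sum_congr rfl fun i _ => ?_
          rw [integral_const_mul, hmom i]
  · intro h
    set V : Set (Fin (k + 1) → ℝ) :=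
      (fun x : ℝ => fun i : Fin (k + 1) => x ^ (i : ℕ)) '' Set.Icc (-1 : ℝ) 1 with hV
    have hVcomp : IsCompact V :=
      isCompact_Icc.image (continuous_pi fun i => continuous_pow _)
    have hVne : V.Nonempty :=
      ⟨_, Set.mem_image_of_mem _ (by norm_num : (0 : ℝ) ∈ Set.Icc (-1 : ℝ) 1)⟩
    have hhull : IsCompact (convexHull ℝ V) := stmt19_compact_hull hVcomp hVne
    obtain ⟨w₀, hw₀⟩ := hVne
    set C : Set (Fin (k + 1) → ℝ) :=
      {y | ∃ r : ℝ, 0 ≤ r ∧ ∃ w ∈ convexHull ℝ V, y = r • w} with hC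
    have h0C : (0 : Fin (k + 1) → ℝ) ∈ C :=
      ⟨0, le_refl 0, w₀, subset_convexHull ℝ V hw₀, (zero_smul ℝ _).symm⟩
    -- every element of the convex hull has first coordinate 1
    have hone : ∀ w ∈ convexHull ℝ V, w 0 = 1 := by
      intro w hw
      have himg : (LinearMap.proj (R := ℝ) (φ := fun _ : Fin (k + 1) => ℝ) 0) ''
          convexHull ℝ V ⊆ {(1 : ℝ)} := by
        rw [LinearMap.image_convexHull]
        refine convexHull_min ?_ (convex_singleton 1)
        rintro a ⟨b, ⟨x, hx, rfl⟩, rfl⟩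
        simp
      have := himg ⟨w, hw, rfl⟩
      simpa using this
    -- C is convex
    have hCconv : Convex ℝ C := by
      rintro y₁ ⟨r₁, hr₁, u₁, hu₁, rfl⟩ y₂ ⟨r₂, hr₂, u₂, hu₂, rfl⟩ a b ha hb hab
      rcases eq_or_lt_of_le (add_nonneg (mul_nonneg ha hr₁) (mul_nonneg hb hr₂)) with hs | hs
      · have h1 : a * r₁ = 0 ∧ b * r₂ = 0 := by
          constructor <;> nlinarith [mul_nonneg ha hr₁, mul_nonneg hb hr₂]
        have : a • r₁ • u₁ + b • r₂ • u₂ = (0 : Fin (k + 1) → ℝ) := by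
          rw [smul_smul, smul_smul, h1.1, h1.2, zero_smul, zero_smul, add_zero]
        rw [this]
        exact h0C
      · set s := a * r₁ + b * r₂ with hsdef
        refine ⟨s, hs.le, (a * r₁ / s) • u₁ + (b * r₂ / s) • u₂, ?_, ?_⟩
        · refine (convex_convexHull ℝ V) hu₁ hu₂ (by positivity) (by positivity) ?_
          field_simp
          exact hsdef.symm
        · rw [smul_add, smul_smul, smul_smul, smul_smul, smul_smul]
          rw [mul_div_cancel₀ _ hs.ne', mul_div_cancel₀ _ hs.ne']
    -- C is closed
    have hCclosed : IsClosed C := by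
      refine IsSeqClosed.isClosed ?_
      intro y q hy hlim
      choose r hr w hw hyrw using hy
      have hyn0 : ∀ n, y n 0 = r n := by
        intro n
        rw [hyrw n, Pi.smul_apply, smul_eq_mul, hone (w n) (hw n), mul_one]
      have hrlim : Filter.Tendsto r Filter.atTop (nhds (q 0)) := by
        have := ((continuous_apply (0 : Fin (k + 1))).tendsto q).comp hlim
        simpa [Function.comp_def, hyn0] using this
      have hq0 : 0 ≤ q 0 := ge_of_tendsto' hrlim hr
      obtain ⟨wl, hwl, φ, hφ, hwlim⟩ := hhull.tendsto_subseq hw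
      have hylim : Filter.Tendsto (fun n => y (φ n)) Filter.atTop (nhds (q 0 • wl)) := by
        have h1 : Filter.Tendsto (fun n => r (φ n)) Filter.atTop (nhds (q 0)) :=
          hrlim.comp hφ.tendsto_atTop
        have := h1.smul hwlim
        simpa [hyrw] using this
      have hq : q = q 0 • wl :=
        tendsto_nhds_unique (hlim.comp hφ.tendsto_atTop) hylim
      exact ⟨q 0, hq0, wl, hwl, hq⟩
    -- the moment vector is in C
    have hmC : μmom ∈ C := by
      by_contra hm
      obtain ⟨f, u, hfa, hum⟩ := geometric_hahn_banach_closed_point hCconv hCclosed hm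
      have hu : 0 < u := by simpa using hfa 0 h0C
      have hfnonpos : ∀ a ∈ C, f a ≤ 0 := by
        rintro y ⟨r, hrr, w, hw, rfl⟩
        by_contra hfa'
        push_neg at hfa'
        have hmem : (2 * u / f (r • w)) • (r • w) ∈ C :=
          ⟨(2 * u / f (r • w)) * r, mul_nonneg (by positivity) hrr, w, hw,
            smul_smul _ _ _⟩
        have h2 := hfa _ hmem
        rw [_root_.map_smul, smul_eq_mul, div_mul_cancel₀ _ hfa'.ne'] at h2
        linarith
      set a : Fin (k + 1) → ℝ := fun i => f (fun j => if i = j then (1 : ℝ) else 0) with ha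
      have hrepr : ∀ y : Fin (k + 1) → ℝ, f y = ∑ i, y i * a i := by
        intro y
        conv_lhs => rw [pi_eq_sum_univ y]
        rw [map_sum]
        exact Finset.sum_congr rfl fun i _ => by rw [_root_.map_smul, smul_eq_mul]
      set p : Polynomial ℝ := ∑ i : Fin (k + 1), Polynomial.monomial (i : ℕ) (-(a i)) with hp
      have hdeg : p.degree ≤ k := by
        refine (Polynomial.degree_sum_le _ _).trans ?_
        refine Finset.sup_le fun i _ => ?_
        refine (Polynomial.degree_monomial_le _ _).trans ?_
        exact_mod_cast Nat.cast_le.2 (Nat.lt_succ_iff.1 i.isLt)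
      have hcoeff : ∀ j : Fin (k + 1), p.coeff j = -(a j) := by
        intro j
        rw [hp, Polynomial.finset_sum_coeff]
        rw [Finset.sum_eq_single j]
        · rw [Polynomial.coeff_monomial, if_pos rfl]
        · intro i _ hij
          rw [Polynomial.coeff_monomial, if_neg (fun hh => hij (Fin.val_injective hh))]
        · intro hj
          exact absurd (Finset.mem_univ j) hj
      have heval : ∀ x : ℝ, p.eval x = -(f (fun i : Fin (k + 1) => x ^ (i : ℕ))) := by
        intro x
        rw [hp, Polynomial.eval_finset_sum]
        rw [hrepr (fun i : Fin (k + 1) => x ^ (i : ℕ))]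
        rw [← Finset.sum_neg_distrib]
        refine Finset.sum_congr rfl fun i _ => ?_
        rw [Polynomial.eval_monomial]
        ring
      have hpos : ∀ x ∈ Set.Icc (-1 : ℝ) 1, 0 ≤ p.eval x := by
        intro x hx
        rw [heval x]
        have hmemC : (fun i : Fin (k + 1) => x ^ (i : ℕ)) ∈ C :=
          ⟨1, zero_le_one, _, subset_convexHull ℝ V ⟨x, hx, rfl⟩, (one_smul ℝ _).symm⟩
        linarith [hfnonpos _ hmemC]
      have hsum := h p hdeg hpos
      have : ∑ i : Fin (k + 1), p.coeff i * μmom i = -(f μmom) := by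
        rw [hrepr μmom, ← Finset.sum_neg_distrib]
        exact Finset.sum_congr rfl fun i _ => by rw [hcoeff i]; ring
      rw [this] at hsum
      linarith
    obtain ⟨r, hr, w, hw, hrw⟩ := hmC
    obtain ⟨μ, h1, h2, h3⟩ := stmt19_cone_mem r hr w hw
    refine ⟨μ, h1, h2, fun i => ?_⟩
    rw [hrw, Pi.smul_apply, smul_eq_mul]
    exact h3 i
end
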